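/- arXiv:1803.10469 — 3 statements merged into one kernel-verified Lean document; each statement's English description precedes it below -/
import Mathlib

section
/- For A ∈ ℝ^{n×n}, the linear map x ↦ Ax is averaged (η-averaged in some P-induced norm for some η ∈ (0,1)) if and only if for every x(0) ∈ ℝⁿ the sequence x(k+1) = A x(k) converges to some point of ker(I − A). -/
open Matrix Filter Finset Polynomial

noncomputable def cmat {m : Type*} [Fintype m] [DecidableEq m]
    (A : Matrix m m ℝ) : Matrix m m ℂ := A.map (fun a => (a : ℂ))

/-- `lam` is a (complex) eigenvalue of the real matrix `A`. -/
def IsEig {m : Type*} [Fintype m] [DecidableEq m]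
    (A : Matrix m m ℝ) (lam : ℂ) : Prop := (cmat A).charpoly.IsRoot lam

/-- algebraic multiplicity of `lam` as an eigenvalue of `A`. -/
noncomputable def algMult {m : Type*} [Fintype m] [DecidableEq m]
    (A : Matrix m m ℝ) (lam : ℂ) : ℕ := (cmat A).charpoly.rootMultiplicity lam

/-- geometric multiplicity of `lam` as an eigenvalue of `A`. -/
noncomputable def geomMult {m : Type*} [Fintype m] [DecidableEq m]
    (A : Matrix m m ℝ) (lam : ℂ) : ℕ :=
  Module.finrank ℂ (LinearMap.ker (Matrix.toLin' (cmat A) - lam • LinearMap.id))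

/-- quadratic form `xᵀ P x`, i.e. `‖x‖_P²`. -/
noncomputable def qf {m : Type*} [Fintype m] (P : Matrix m m ℝ) (x : m → ℝ) : ℝ :=
  x ⬝ᵥ P.mulVec x

/-- the norm `‖x‖_P = √(xᵀ P x)`. -/
noncomputable def pnorm {m : Type*} [Fintype m] (P : Matrix m m ℝ) (x : m → ℝ) : ℝ :=
  Real.sqrt (qf P x)


section StmtNine
variable {n : ℕ}


variable {n : ℕ}

lemma dot_self_nonneg (v : Fin n → ℝ) : 0 ≤ v ⬝ᵥ v :=
  Finset.sum_nonneg fun i _ => mul_self_nonneg _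

lemma dot_symm (P : Matrix (Fin n) (Fin n) ℝ) (hP : Pᵀ = P) (u v : Fin n → ℝ) :
    v ⬝ᵥ P *ᵥ u = u ⬝ᵥ P *ᵥ v := by
  rw [Matrix.dotProduct_mulVec]
  conv_lhs => rw [← hP]
  rw [Matrix.vecMul_transpose, dotProduct_comm]

lemma qf_expand {P : Matrix (Fin n) (Fin n) ℝ} (hP : Pᵀ = P) (a b : ℝ) (u v : Fin n → ℝ) :
    qf P (a • u + b • v)
      = a^2 * qf P u + 2*a*b*(u ⬝ᵥ P *ᵥ v) + b^2 * qf P v := by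
  have hs := dot_symm P hP u v
  simp only [qf, Matrix.mulVec_add, Matrix.mulVec_smul, dotProduct_add,
    add_dotProduct, smul_dotProduct, dotProduct_smul, smul_eq_mul]
  linear_combination (a*b) * hs

lemma psd_cs {Q : Matrix (Fin n) (Fin n) ℝ} (hQ : Qᵀ = Q) (hpsd : ∀ x, 0 ≤ qf Q x)
    (u v : Fin n → ℝ) : (u ⬝ᵥ Q *ᵥ v)^2 ≤ qf Q u * qf Q v := by
  set B := u ⬝ᵥ Q *ᵥ v with hB
  have key : ∀ a b : ℝ, 0 ≤ a^2 * qf Q u + 2*a*b*B + b^2 * qf Q v := fun a b => by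
    rw [← qf_expand hQ]; exact hpsd _
  rcases eq_or_lt_of_le (hpsd v) with h0 | hpos
  · have hB0 : B = 0 := by
      by_contra hBne
      have hbB : 2 * 1 * (-(qf Q u + 1)/(2*B)) * B = -(qf Q u + 1) := by
        field_simp
      have h5 := key 1 (-(qf Q u + 1)/(2*B))
      rw [← h0] at h5
      nlinarith [h5, hbB]
    rw [hB0, ← h0]
    nlinarith [hpsd u]
  · have := key (qf Q v) (-B)
    nlinarith [this, hpos]

lemma frob_bound (M : Matrix (Fin n) (Fin n) ℝ) (w : Fin n → ℝ) :
    (M *ᵥ w) ⬝ᵥ (M *ᵥ w) ≤ (∑ i, ∑ j, (M i j)^2) * (w ⬝ᵥ w) := by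
  have h1 : ∀ i, ((M *ᵥ w) i)^2 ≤ (∑ j, (M i j)^2) * (w ⬝ᵥ w) := by
    intro i
    have := Finset.sum_mul_sq_le_sq_mul_sq Finset.univ (M i) w
    simpa [Matrix.mulVec, dotProduct, sq] using this
  calc (M *ᵥ w) ⬝ᵥ (M *ᵥ w) = ∑ i, ((M *ᵥ w) i)^2 := by
        simp [dotProduct, sq]
    _ ≤ ∑ i, (∑ j, (M i j)^2) * (w ⬝ᵥ w) := Finset.sum_le_sum fun i _ => h1 i
    _ = (∑ i, ∑ j, (M i j)^2) * (w ⬝ᵥ w) := by rw [Finset.sum_mul]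

lemma mulVec_ext {M N : Matrix (Fin n) (Fin n) ℝ} (h : ∀ v, M *ᵥ v = N *ᵥ v) : M = N := by
  have : Matrix.toLin' M = Matrix.toLin' N := by
    apply LinearMap.ext; intro v
    simpa [Matrix.toLin'_apply] using h v
  exact Matrix.toLin'.injective this

lemma sum_mulVec' {s : Finset ℕ} (M : ℕ → Matrix (Fin n) (Fin n) ℝ) (x : Fin n → ℝ) :
    (∑ k ∈ s, M k) *ᵥ x = ∑ k ∈ s, (M k) *ᵥ x :=
  map_sum (AddMonoidHom.mk' (fun (M : Matrix (Fin n) (Fin n) ℝ) => M *ᵥ x)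
    (fun a b => Matrix.add_mulVec a b x)) M s

lemma norm_le_sqrt_dot (v : Fin n → ℝ) : ‖v‖ ≤ Real.sqrt (v ⬝ᵥ v) := by
  rw [pi_norm_le_iff_of_nonneg (Real.sqrt_nonneg _)]
  intro i
  rw [Real.norm_eq_abs]
  apply Real.abs_le_sqrt
  rw [pow_two]
  exact Finset.single_le_sum (f := fun j => v j * v j)
    (fun j _ => mul_self_nonneg _) (Finset.mem_univ i)

lemma mulVec_continuous (M : Matrix (Fin n) (Fin n) ℝ) :
    Continuous (fun v : Fin n → ℝ => M *ᵥ v) := by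
  have h := LinearMap.continuous_of_finiteDimensional (Matrix.toLin' M)
  have he : (fun v : Fin n → ℝ => M *ᵥ v) = ⇑(Matrix.toLin' M) := by
    funext v; simp [Matrix.toLin'_apply]
  rw [he]; exact h

lemma qf_continuous (P : Matrix (Fin n) (Fin n) ℝ) : Continuous (fun v => qf P v) := by
  unfold qf dotProduct
  apply continuous_finset_sum
  intro i _
  exact (continuous_apply i).mul ((continuous_apply i).comp (mulVec_continuous P))

lemma tendsto_zero_of_dot_tendsto (v : ℕ → Fin n → ℝ)
    (h : Tendsto (fun k => (v k) ⬝ᵥ (v k)) atTop (nhds 0)) : Tendsto v atTop (nhds 0) := by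
  rw [tendsto_zero_iff_norm_tendsto_zero]
  apply squeeze_zero (fun k => norm_nonneg _) (fun k => norm_le_sqrt_dot _)
  have := (Real.continuous_sqrt.tendsto 0).comp h
  simpa [Function.comp_def] using this

lemma avg_key {P : Matrix (Fin n) (Fin n) ℝ} (hP : Pᵀ = P) {η : ℝ} (hη0 : 0 < η) (hη1 : η < 1)
    (z t : Fin n → ℝ) (h : qf P t ≤ qf P z) :
    qf P ((1-η) • z + η • t) ≤ qf P z - ((1-η)/η) * qf P (η • (z - t)) := by
  have e1 := qf_expand hP (1-η) η z t
  have e2 : qf P (η • (z - t)) = η^2 * qf P z - 2*η*η*(z ⬝ᵥ P *ᵥ t) + η^2 * qf P t := by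
    have h3 := qf_expand hP η (-η) z t
    have : η • (z - t) = η • z + (-η) • t := by
      rw [smul_sub, sub_eq_add_neg, neg_smul]
    rw [this, h3]; ring
  rw [e1, e2]
  have hηne : η ≠ 0 := ne_of_gt hη0
  have hdiv : ((1-η)/η) * (η^2 * qf P z - 2*η*η*(z ⬝ᵥ P *ᵥ t) + η^2 * qf P t)
      = (1-η)*η*(qf P z - 2*(z ⬝ᵥ P *ᵥ t) + qf P t) := by
    field_simp
  rw [hdiv]
  have hsym : z ⬝ᵥ P *ᵥ t = t ⬝ᵥ P *ᵥ z := dot_symm P hP t z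
  have hac : 0 ≤ η * (qf P z - qf P t) := mul_nonneg hη0.le (by linarith)
  nlinarith [hac, hsym]


-- assume helpers proven
lemma hermitian_real_iff {P : Matrix (Fin n) (Fin n) ℝ} (hP : P.IsHermitian) : Pᵀ = P := by
  rw [← Matrix.conjTranspose_eq_transpose_of_trivial]; exact hP

lemma qf_nonneg_of_psd {P : Matrix (Fin n) (Fin n) ℝ} (hP : P.PosSemidef) (v : Fin n → ℝ) :
    0 ≤ qf P v := by
  have := hP.dotProduct_mulVec_nonneg v
  simpa [qf] using this

lemma posdef_coercive {P : Matrix (Fin n) (Fin n) ℝ} (hP : P.PosDef) :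
    ∃ μ : ℝ, 0 < μ ∧ ∀ v, μ * (v ⬝ᵥ v) ≤ qf P v := by
  open scoped MatrixOrder in
  set S := CFC.sqrt P with hS
  open scoped MatrixOrder in
  have hSS : S * S = P := CFC.sqrt_mul_sqrt_self P hP.posSemidef.nonneg
  open scoped MatrixOrder in
  have hSsym : Sᵀ = S := hermitian_real_iff (CFC.sqrt_nonneg P).posSemidef.1
  have hdet : IsUnit S.det := by
    have hdP : 0 < P.det := hP.det_pos
    rw [← hSS, Matrix.det_mul] at hdP
    have : S.det ≠ 0 := fun h => by simp [h] at hdP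
    exact isUnit_iff_ne_zero.mpr this
  have hinv : S⁻¹ * S = 1 := Matrix.nonsing_inv_mul S hdet
  have hqf : ∀ v, qf P v = (S *ᵥ v) ⬝ᵥ (S *ᵥ v) := by
    intro v
    rw [qf, ← hSS, ← Matrix.mulVec_mulVec]
    rw [Matrix.dotProduct_mulVec]
    conv_lhs => rw [← hSsym]
    rw [Matrix.vecMul_transpose, hSsym]
  set C := ∑ i, ∑ j, ((S⁻¹) i j)^2 with hC
  have hC0 : 0 ≤ C := Finset.sum_nonneg fun i _ => Finset.sum_nonneg fun j _ => sq_nonneg _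
  refine ⟨1/(C+1), by positivity, fun v => ?_⟩
  have h1 : v ⬝ᵥ v ≤ C * ((S *ᵥ v) ⬝ᵥ (S *ᵥ v)) := by
    have := frob_bound (S⁻¹) (S *ᵥ v)
    rwa [Matrix.mulVec_mulVec, hinv, Matrix.one_mulVec] at this
  have h2 : 0 ≤ (S *ᵥ v) ⬝ᵥ (S *ᵥ v) := dot_self_nonneg _
  rw [hqf]
  rw [div_mul_eq_mul_div, div_le_iff₀ (by positivity)]
  nlinarith [h1, h2]

theorem fwd (A : Matrix (Fin n) (Fin n) ℝ)
    (e : ℝ) (he : e ∈ Set.Ioo (0:ℝ) 1) (P : Matrix (Fin n) (Fin n) ℝ) (hP : P.PosDef)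
    (h : ∀ x y : Fin n → ℝ,
          qf P (A.mulVec x - A.mulVec y) ≤
            qf P (x - y) - ((1 - e) / e) * qf P ((1 - A).mulVec (x - y)))
    (x : ℕ → Fin n → ℝ) (hx : ∀ j, x (j + 1) = A.mulVec (x j)) :
    ∃ xbar : Fin n → ℝ, (1 - A).mulVec xbar = 0 ∧ Tendsto x atTop (nhds xbar) := by
  obtain ⟨he0, he1⟩ := he
  set c := (1-e)/e with hc
  have hc0 : 0 < c := div_pos (by linarith) he0
  have hpsd : ∀ v, 0 ≤ qf P v := qf_nonneg_of_psd hP.posSemidef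
  obtain ⟨μ, hμ0, hμ⟩ := posdef_coercive hP
  -- step inequality vs fixed points
  have step : ∀ w, A *ᵥ w = w → ∀ k,
      qf P (x (k+1) - w) ≤ qf P (x k - w) - c * qf P ((1-A) *ᵥ (x k - w)) := by
    intro w hw k
    have h2 := h (x k) w
    rw [hw] at h2
    rw [hx k]
    exact h2
  have step0 : ∀ k, qf P (x (k+1)) ≤ qf P (x k) - c * qf P ((1-A) *ᵥ (x k)) := by
    intro k
    have := step 0 (Matrix.mulVec_zero A) k
    simpa using this
  have anti0 : Antitone (fun k => qf P (x k)) := by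
    apply antitone_nat_of_succ_le
    intro k
    have := step0 k
    nlinarith [mul_nonneg hc0.le (hpsd ((1-A) *ᵥ (x k)))]
  -- partial sums bounded
  have hsum : ∀ K, ∑ k ∈ Finset.range K, c * qf P ((1-A) *ᵥ (x k)) ≤ qf P (x 0) := by
    intro K
    have key : ∀ K, ∑ k ∈ Finset.range K, c * qf P ((1-A) *ᵥ (x k))
        ≤ qf P (x 0) - qf P (x K) := by
      intro K
      induction K with
      | zero => simp
      | succ K ih =>
        rw [Finset.sum_range_succ]
        have := step0 K
        linarith
    have := key K
    nlinarith [hpsd (x K)]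
  have hsummable : Summable (fun k => c * qf P ((1-A) *ᵥ (x k))) :=
    summable_of_sum_range_le (fun k => mul_nonneg hc0.le (hpsd _)) hsum
  have htend : Tendsto (fun k => qf P ((1-A) *ᵥ (x k))) atTop (nhds 0) := by
    have h1 := hsummable.tendsto_atTop_zero
    have h2 : Tendsto (fun k => c * qf P ((1-A) *ᵥ (x k)) / c) atTop (nhds (0/c)) :=
      h1.div_const c
    simpa [mul_div_cancel_left₀ _ (ne_of_gt hc0)] using h2
  -- (1-A) x k tends to 0 as a vector
  have hvec0 : Tendsto (fun k => (1-A) *ᵥ (x k)) atTop (nhds 0) := by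
    apply tendsto_zero_of_dot_tendsto
    apply squeeze_zero (fun k => dot_self_nonneg _)
      (fun k => ?_) (by simpa using htend.div_const μ)
    · have := hμ ((1-A) *ᵥ (x k))
      rw [le_div_iff₀ hμ0]
      nlinarith [this]
  -- boundedness
  have hbdd : ∀ k, x k ∈ Metric.closedBall (0 : Fin n → ℝ) (Real.sqrt (qf P (x 0) / μ)) := by
    intro k
    rw [Metric.mem_closedBall, dist_zero_right]
    apply le_trans (norm_le_sqrt_dot _)
    apply Real.sqrt_le_sqrt
    rw [le_div_iff₀ hμ0]
    have h1 := hμ (x k)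
    have h2 : qf P (x k) ≤ qf P (x 0) := anti0 (Nat.zero_le k)
    nlinarith
  obtain ⟨w, -, φ, hφmono, hφtend⟩ :=
    tendsto_subseq_of_bounded Metric.isBounded_closedBall hbdd
  -- w is a fixed point
  have hwfix : (1 - A) *ᵥ w = 0 := by
    have h1 : Tendsto (fun j => (1-A) *ᵥ (x (φ j))) atTop (nhds ((1-A) *ᵥ w)) :=
      ((mulVec_continuous (1-A)).tendsto w).comp hφtend
    have h2 : Tendsto (fun j => (1-A) *ᵥ (x (φ j))) atTop (nhds 0) :=
      hvec0.comp hφmono.tendsto_atTop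
    exact tendsto_nhds_unique h1 h2
  have hwfix' : A *ᵥ w = w := by
    have : w - A *ᵥ w = 0 := by
      rw [← hwfix, Matrix.sub_mulVec, Matrix.one_mulVec]
    have := sub_eq_zero.mp this
    exact this.symm
  -- distance to w is antitone
  set d := fun k => qf P (x k - w) with hd
  have hdanti : Antitone d := by
    apply antitone_nat_of_succ_le
    intro k
    have := step w hwfix' k
    nlinarith [mul_nonneg hc0.le (hpsd ((1-A) *ᵥ (x k - w)))]
  have hdnonneg : ∀ k, 0 ≤ d k := fun k => hpsd _
  have hdsub : Tendsto (fun j => d (φ j)) atTop (nhds 0) := by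
    have h1 : Tendsto (fun j => x (φ j) - w) atTop (nhds 0) := by
      have := hφtend.sub_const w
      simpa using this
    have h2 := ((qf_continuous P).tendsto 0).comp h1
    have h3 : qf P 0 = 0 := by simp [qf]
    rw [h3] at h2
    exact h2
  have hdtend : Tendsto d atTop (nhds 0) := by
    have hbdd : BddBelow (Set.range d) := ⟨0, fun y ⟨k, hk⟩ => hk ▸ hdnonneg k⟩
    have h1 : Tendsto d atTop (nhds (⨅ k, d k)) := tendsto_atTop_ciInf hdanti hbdd
    have h2 : Tendsto (fun j => d (φ j)) atTop (nhds (⨅ k, d k)) :=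
      h1.comp hφmono.tendsto_atTop
    have : (⨅ k, d k) = 0 := tendsto_nhds_unique h2 hdsub
    rwa [this] at h1
  refine ⟨w, hwfix, ?_⟩
  have hx0 : Tendsto (fun k => x k - w) atTop (nhds 0) := by
    apply tendsto_zero_of_dot_tendsto
    apply squeeze_zero (fun k => dot_self_nonneg _)
      (fun k => ?_) (by simpa using hdtend.div_const μ)
    · have := hμ (x k - w)
      rw [le_div_iff₀ hμ0]
      nlinarith [this]
  have := hx0.add_const w
  simpa using this

lemma dot_sum' {s : Finset ℕ} (v : Fin n → ℝ) (w : ℕ → Fin n → ℝ) :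
    v ⬝ᵥ (∑ k ∈ s, w k) = ∑ k ∈ s, v ⬝ᵥ (w k) :=
  map_sum (AddMonoidHom.mk' (fun u => v ⬝ᵥ u) (fun a b => dotProduct_add v a b)) w s

set_option maxHeartbeats 1000000 in
theorem bwd (A : Matrix (Fin n) (Fin n) ℝ)
    (H : ∀ x : ℕ → Fin n → ℝ, (∀ j, x (j + 1) = A.mulVec (x j)) →
        ∃ xbar : Fin n → ℝ, (1 - A).mulVec xbar = 0 ∧
          Tendsto x atTop (nhds xbar)) :
    ∃ e ∈ Set.Ioo (0 : ℝ) 1, ∃ P : Matrix (Fin n) (Fin n) ℝ, P.PosDef ∧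
        ∀ x y : Fin n → ℝ,
          qf P (A.mulVec x - A.mulVec y) ≤
            qf P (x - y) - ((1 - e) / e) * qf P ((1 - A).mulVec (x - y)) := by
  -- the limit map L
  have hrec : ∀ x₀ : Fin n → ℝ, ∀ j, (A^(j+1)) *ᵥ x₀ = A *ᵥ ((A^j) *ᵥ x₀) := by
    intro x₀ j
    rw [Matrix.mulVec_mulVec, ← pow_succ']
  choose L hL1 hL2 using fun x₀ => H (fun k => (A^k) *ᵥ x₀) (hrec x₀)
  have hLA : ∀ x₀, A *ᵥ (L x₀) = L x₀ := by
    intro x₀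
    have h := hL1 x₀
    rw [Matrix.sub_mulVec, Matrix.one_mulVec] at h
    exact (sub_eq_zero.mp h).symm
  have hLpowfix : ∀ x₀ k, (A^k) *ᵥ (L x₀) = L x₀ := by
    intro x₀ k
    induction k with
    | zero => simp [Matrix.one_mulVec]
    | succ k ih => rw [hrec, ih, hLA]
  have hLL : ∀ x₀, L (L x₀) = L x₀ := by
    intro x₀
    have h1 : Tendsto (fun k => (A^k) *ᵥ (L x₀)) atTop (nhds (L x₀)) := by
      simp only [hLpowfix]
      exact tendsto_const_nhds
    exact tendsto_nhds_unique (hL2 (L x₀)) h1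
  have hshift : ∀ x₀, L (A *ᵥ x₀) = L x₀ := by
    intro x₀
    have h1 : Tendsto (fun k => (A^k) *ᵥ (A *ᵥ x₀)) atTop (nhds (L x₀)) := by
      have h2 : Tendsto (fun k => (A^(k+1)) *ᵥ x₀) atTop (nhds (L x₀)) :=
        (hL2 x₀).comp (tendsto_add_atTop_nat 1)
      have h3 : (fun k => (A^k) *ᵥ (A *ᵥ x₀)) = fun k => (A^(k+1)) *ᵥ x₀ := by
        funext k
        rw [Matrix.mulVec_mulVec, ← pow_succ]
      rw [h3]
      exact h2
    exact tendsto_nhds_unique (hL2 (A *ᵥ x₀)) h1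
  have hLadd : ∀ u v, L (u + v) = L u + L v := by
    intro u v
    refine tendsto_nhds_unique (hL2 (u + v)) ?_
    have h2 : (fun k => (A^k) *ᵥ (u + v)) = fun k => (A^k) *ᵥ u + (A^k) *ᵥ v := by
      funext k; rw [Matrix.mulVec_add]
    rw [h2]
    exact (hL2 u).add (hL2 v)
  have hLsmul : ∀ (c : ℝ) u, L (c • u) = c • L u := by
    intro c u
    refine tendsto_nhds_unique (hL2 (c • u)) ?_
    have h2 : (fun k => (A^k) *ᵥ (c • u)) = fun k => c • ((A^k) *ᵥ u) := by
      funext k; rw [Matrix.mulVec_smul]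
    rw [h2]
    exact (hL2 u).const_smul c
  -- matrix E realizing L
  obtain ⟨E, hE⟩ : ∃ E : Matrix (Fin n) (Fin n) ℝ, ∀ v, E *ᵥ v = L v := by
    refine ⟨LinearMap.toMatrix'
      { toFun := L, map_add' := hLadd, map_smul' := hLsmul }, fun v => ?_⟩
    rw [← Matrix.toLin'_apply, Matrix.toLin'_toMatrix']
    rfl
  have hAE : A * E = E := mulVec_ext fun v => by
    simp only [← Matrix.mulVec_mulVec, hE]; exact hLA v
  have hEA : E * A = E := mulVec_ext fun v => by
    simp only [← Matrix.mulVec_mulVec, hE]; exact hshift v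
  have hEE : E * E = E := mulVec_ext fun v => by
    simp only [← Matrix.mulVec_mulVec, hE]; exact hLL v
  obtain ⟨N, hN⟩ : ∃ N, N = A - E := ⟨_, rfl⟩
  have hNE : N * E = 0 := by rw [hN, sub_mul, hAE, hEE, sub_self]
  have hNA : (1 - E) * A = N := by rw [hN, sub_mul, one_mul, hEA]
  have hApowE : ∀ j : ℕ, A^j * E = E := by
    intro j
    induction j with
    | zero => simp
    | succ j ihj => rw [pow_succ, mul_assoc, hAE, ihj]
  have hNpow : ∀ k, N^(k+1) = A^(k+1) - E := by
    intro k
    induction k with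
    | zero => simpa using hN
    | succ k ih =>
      rw [pow_succ, ih, hN, sub_mul, mul_sub, mul_sub, hApowE, hEA, hEE, ← pow_succ,
        sub_self, sub_zero]
  -- Frobenius norms of powers of N
  obtain ⟨Fr, hFr⟩ : ∃ Fr : ℕ → ℝ, ∀ k, Fr k = ∑ i, ∑ j, ((N^k) i j)^2 :=
    ⟨_, fun _ => rfl⟩
  have hFr0 : ∀ k, 0 ≤ Fr k := fun k => by
    rw [hFr]
    exact Finset.sum_nonneg fun i _ => Finset.sum_nonneg fun j _ => sq_nonneg _
  have hentry : ∀ i j, Tendsto (fun k => (N^(k+1)) i j) atTop (nhds 0) := by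
    intro i j
    obtain ⟨ej, hej⟩ : ∃ ej : Fin n → ℝ, ej = Pi.single j 1 := ⟨_, rfl⟩
    have hvec : Tendsto (fun k => (N^(k+1)) *ᵥ ej) atTop (nhds 0) := by
      have h5 : ∀ k : ℕ, (N^(k+1)) *ᵥ ej = (A^(k+1)) *ᵥ ej - L ej := by
        intro k; rw [hNpow k, Matrix.sub_mulVec, hE]
      simp only [h5]
      have h1 : Tendsto (fun k => (A^k) *ᵥ ej - L ej) atTop (nhds 0) := by
        have := (hL2 ej).sub_const (L ej)
        simpa using this
      exact h1.comp (tendsto_add_atTop_nat 1)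
    have h2 := ((continuous_apply i).tendsto (0 : Fin n → ℝ)).comp hvec
    have h6 : ∀ k : ℕ, (N^(k+1)) i j = ((N^(k+1)) *ᵥ ej) i := by
      intro k
      rw [hej, Matrix.mulVec_single]
      simp
    simp only [h6]
    simpa [Function.comp_def] using h2
  have hFrtend : Tendsto (fun k => Fr (k+1)) atTop (nhds 0) := by
    simp only [hFr]
    have hz : (0:ℝ) = ∑ _i : Fin n, ∑ _j : Fin n, (0:ℝ) := by simp
    rw [hz]
    apply tendsto_finset_sum
    intro i _
    apply tendsto_finset_sum
    intro j _
    have := (hentry i j).pow 2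
    simpa using this
  obtain ⟨k₀, hk₀⟩ := (hFrtend.eventually (gt_mem_nhds (by norm_num : (0:ℝ) < 1/4))).exists
  obtain ⟨m, hm⟩ : ∃ m : ℕ, m = k₀ + 1 := ⟨_, rfl⟩
  have hFrm : Fr m < 1/4 := by rw [hm]; exact hk₀
  -- the matrix Q
  obtain ⟨Q, hQdef⟩ : ∃ Q, Q = ∑ k ∈ Finset.range m, (Nᵀ)^k * N^k := ⟨_, rfl⟩
  have hQsym : Qᵀ = Q := by
    rw [hQdef, Matrix.transpose_sum]
    apply Finset.sum_congr rfl
    intro k _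
    rw [Matrix.transpose_mul, Matrix.transpose_pow, Matrix.transpose_pow,
      Matrix.transpose_transpose, ← Matrix.transpose_pow]
  have hqQ : ∀ v, qf Q v = ∑ k ∈ Finset.range m, ((N^k) *ᵥ v) ⬝ᵥ ((N^k) *ᵥ v) := by
    intro v
    rw [qf, hQdef, sum_mulVec', dot_sum']
    apply Finset.sum_congr rfl
    intro k _
    rw [← Matrix.mulVec_mulVec, Matrix.dotProduct_mulVec, ← Matrix.transpose_pow,
      Matrix.vecMul_transpose]
  have hQpsd : ∀ v, 0 ≤ qf Q v := by
    intro v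
    rw [hqQ]
    exact Finset.sum_nonneg fun k _ => dot_self_nonneg _
  have hQlow : ∀ v, v ⬝ᵥ v ≤ qf Q v := by
    intro v
    rw [hqQ]
    have h0m : 0 ∈ Finset.range m := by simp [hm]
    have := Finset.single_le_sum (f := fun k => ((N^k) *ᵥ v) ⬝ᵥ ((N^k) *ᵥ v))
      (fun k _ => dot_self_nonneg _) h0m
    simpa [Matrix.one_mulVec] using this
  -- contraction constant
  obtain ⟨K, hK⟩ : ∃ K : ℝ, K = 1 + ∑ k ∈ Finset.range m, Fr k := ⟨_, rfl⟩
  have hK1 : 1 ≤ K := by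
    have : 0 ≤ ∑ k ∈ Finset.range m, Fr k := Finset.sum_nonneg fun k _ => hFr0 k
    rw [hK]; linarith
  obtain ⟨ρ, hρ⟩ : ∃ ρ : ℝ, ρ = 1 - 3/(4*K) := ⟨_, rfl⟩
  have hρ1 : ρ < 1 := by
    rw [hρ]
    have : 0 < 3/(4*K) := by positivity
    linarith
  have hρ4 : 1/4 ≤ ρ := by
    rw [hρ]
    have h1 : 3/(4*K) ≤ 3/4 := by
      apply div_le_div_of_nonneg_left (by norm_num) (by norm_num)
      linarith
    linarith
  have hρ0 : 0 ≤ ρ := by linarith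
  have hQcontract : ∀ v, qf Q (N *ᵥ v) ≤ ρ * qf Q v := by
    intro v
    obtain ⟨s, hs⟩ : ∃ s : ℕ → ℝ, ∀ k, s k = ((N^k) *ᵥ v) ⬝ᵥ ((N^k) *ᵥ v) :=
      ⟨_, fun _ => rfl⟩
    have hsn : ∀ k, 0 ≤ s k := fun k => by rw [hs]; exact dot_self_nonneg _
    have hs00 : s 0 = v ⬝ᵥ v := by rw [hs]; simp [Matrix.one_mulVec]
    have h1 : qf Q (N *ᵥ v) = ∑ k ∈ Finset.range m, s (k+1) := by
      rw [hqQ]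
      apply Finset.sum_congr rfl
      intro k _
      rw [hs, Matrix.mulVec_mulVec, ← pow_succ]
    have h2 : ∑ k ∈ Finset.range m, s (k+1) = (∑ k ∈ Finset.range m, s k) + s m - s 0 := by
      have := Finset.sum_range_succ' s m
      rw [Finset.sum_range_succ] at this
      linarith
    have h3 : qf Q v = ∑ k ∈ Finset.range m, s k := by
      rw [hqQ]
      exact Finset.sum_congr rfl fun k _ => (hs k).symm
    have hsF : ∀ k, s k ≤ Fr k * s 0 := by
      intro k
      rw [hs, hs00, hFr]
      exact frob_bound (N^k) v
    have hsm : s m ≤ (1/4) * s 0 := by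
      have := hsF m
      nlinarith [hsn 0, hFrm]
    have hqK : qf Q v ≤ (K - 1) * s 0 := by
      rw [h3]
      calc ∑ k ∈ Finset.range m, s k ≤ ∑ k ∈ Finset.range m, Fr k * s 0 :=
            Finset.sum_le_sum fun k _ => hsF k
        _ = (∑ k ∈ Finset.range m, Fr k) * s 0 := by rw [Finset.sum_mul]
        _ = (K - 1) * s 0 := by rw [hK]; ring
    have hK0 : (0:ℝ) < K := by linarith
    rw [h1, h2, ← h3, hρ]
    have hq0 : 0 ≤ qf Q v := hQpsd v
    have hqKs : qf Q v ≤ K * s 0 := by nlinarith [hsn 0]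
    have e2 : (3/(4*K)) * qf Q v ≤ (3/4) * s 0 := by
      rw [div_mul_eq_mul_div, div_le_iff₀ (by positivity)]
      nlinarith [hqKs]
    nlinarith [hsm, e2]
  -- choose r and η
  obtain ⟨r, hr⟩ : ∃ r : ℝ, r = Real.sqrt ρ := ⟨_, rfl⟩
  have hr2 : r^2 = ρ := by rw [hr]; exact Real.sq_sqrt hρ0
  have hr0 : 0 ≤ r := by rw [hr]; exact Real.sqrt_nonneg _
  have hrlt : r < 1 := by nlinarith [hr2, hρ1, hr0]
  obtain ⟨η, hη⟩ : ∃ η : ℝ, η = (1 + r)/2 := ⟨_, rfl⟩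
  have hη0 : 0 < η := by rw [hη]; linarith
  have hη1 : η < 1 := by rw [hη]; linarith
  -- the matrix P
  obtain ⟨P, hPdef⟩ : ∃ P, P = Eᵀ * E + (1 - E)ᵀ * Q * (1 - E) := ⟨_, rfl⟩
  have hPsym : Pᵀ = P := by
    rw [hPdef, Matrix.transpose_add, Matrix.transpose_mul, Matrix.transpose_transpose,
      Matrix.transpose_mul, Matrix.transpose_mul, Matrix.transpose_transpose, hQsym,
      Matrix.mul_assoc]
  have hPdecomp : ∀ w, qf P w = (E *ᵥ w) ⬝ᵥ (E *ᵥ w) + qf Q ((1 - E) *ᵥ w) := by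
    intro w
    rw [qf, hPdef, Matrix.add_mulVec, dotProduct_add]
    congr 1
    · rw [← Matrix.mulVec_mulVec, Matrix.dotProduct_mulVec, Matrix.vecMul_transpose]
    · rw [qf, Matrix.mul_assoc, ← Matrix.mulVec_mulVec, Matrix.dotProduct_mulVec,
        Matrix.vecMul_transpose, Matrix.mulVec_mulVec]
  have hPpos : P.PosDef := by
    refine Matrix.PosDef.of_dotProduct_mulVec_pos ?_ ?_
    · rw [Matrix.IsHermitian, Matrix.conjTranspose_eq_transpose_of_trivial]
      exact hPsym
    · intro v hv
      have hst : star v = v := by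
        funext i; simp
      rw [hst, ← qf, hPdecomp]
      by_contra hle
      push_neg at hle
      have h1 : 0 ≤ (E *ᵥ v) ⬝ᵥ (E *ᵥ v) := dot_self_nonneg _
      have h2 : 0 ≤ qf Q ((1 - E) *ᵥ v) := hQpsd _
      have h3 : qf Q ((1 - E) *ᵥ v) = 0 := by linarith
      have h4 : (E *ᵥ v) ⬝ᵥ (E *ᵥ v) = 0 := by linarith
      have h5 : ((1 - E) *ᵥ v) ⬝ᵥ ((1 - E) *ᵥ v) = 0 := by
        have ha := hQlow ((1 - E) *ᵥ v)
        have hb := dot_self_nonneg ((1 - E) *ᵥ v)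
        linarith
      have h6 : (1 - E) *ᵥ v = 0 := dotProduct_self_eq_zero.mp h5
      have h7 : E *ᵥ v = 0 := dotProduct_self_eq_zero.mp h4
      apply hv
      have h8 : v - E *ᵥ v = 0 := by
        rw [← h6, Matrix.sub_mulVec, Matrix.one_mulVec]
      rw [h7, sub_zero] at h8
      exact h8
  -- nonexpansiveness of the reflected map
  have hT : ∀ z, qf P ((1/η) • (A *ᵥ z) + (-((1-η)/η)) • z) ≤ qf P z := by
    intro z
    have hηne : η ≠ 0 := ne_of_gt hη0
    have hEt : E *ᵥ ((1/η) • (A *ᵥ z) + (-((1-η)/η)) • z) = E *ᵥ z := by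
      rw [Matrix.mulVec_add, Matrix.mulVec_smul, Matrix.mulVec_smul,
        Matrix.mulVec_mulVec, hEA, ← add_smul]
      have : 1/η + -((1-η)/η) = 1 := by field_simp; ring
      rw [this, one_smul]
    have hNv : N *ᵥ z = N *ᵥ ((1 - E) *ᵥ z) := by
      rw [Matrix.mulVec_mulVec]
      have : N * (1 - E) = N := by rw [mul_sub, mul_one, hNE, sub_zero]
      rw [this]
    have h1Et : (1 - E) *ᵥ ((1/η) • (A *ᵥ z) + (-((1-η)/η)) • z)
        = (1/η) • (N *ᵥ ((1 - E) *ᵥ z)) + (-((1-η)/η)) • ((1 - E) *ᵥ z) := by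
      rw [Matrix.mulVec_add, Matrix.mulVec_smul, Matrix.mulVec_smul,
        Matrix.mulVec_mulVec, hNA, hNv]
    have hcontr : qf Q ((1/η) • (N *ᵥ ((1 - E) *ᵥ z)) + (-((1-η)/η)) • ((1 - E) *ᵥ z))
        ≤ qf Q ((1 - E) *ᵥ z) := by
      rw [qf_expand hQsym]
      obtain ⟨v, hvdef⟩ : ∃ v, v = (1 - E) *ᵥ z := ⟨_, rfl⟩
      rw [← hvdef]
      have hqv0 : 0 ≤ qf Q v := hQpsd v
      have hqN0 : 0 ≤ qf Q (N *ᵥ v) := hQpsd _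
      have hc1 : qf Q (N *ᵥ v) ≤ r^2 * qf Q v := by rw [hr2]; exact hQcontract v
      have hcs : ((N *ᵥ v) ⬝ᵥ Q *ᵥ v)^2 ≤ qf Q (N *ᵥ v) * qf Q v :=
        psd_cs hQsym hQpsd (N *ᵥ v) v
      have hBge : -(r * qf Q v) ≤ (N *ᵥ v) ⬝ᵥ Q *ᵥ v := by
        have hrqv : 0 ≤ r * qf Q v := mul_nonneg hr0 hqv0
        by_contra hcon
        push_neg at hcon
        have h1 : ((N *ᵥ v) ⬝ᵥ Q *ᵥ v) + r * qf Q v < 0 := by linarith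
        have h2 : ((N *ᵥ v) ⬝ᵥ Q *ᵥ v) - r * qf Q v < 0 := by linarith
        have h3 := mul_pos_of_neg_of_neg h2 h1
        have h4 := mul_le_mul_of_nonneg_right hc1 hqv0
        nlinarith [h3, h4, hcs]
      have hgoal : qf Q (N *ᵥ v) - 2*(1-η)*((N *ᵥ v) ⬝ᵥ Q *ᵥ v) + (1-η)^2 * qf Q v
          ≤ η^2 * qf Q v := by
        have h1η : 0 ≤ 1 - η := by linarith
        have hval : r^2 + 2*(1-η)*r + (1-η)^2 = η^2 := by
          rw [hη]; ring
        nlinarith [hc1, hval, mul_le_mul_of_nonneg_left hBge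
          (mul_nonneg (by norm_num : (0:ℝ) ≤ 2) h1η)]
      have hη2 : (0:ℝ) < η^2 := by positivity
      have expand : (1/η)^2 * qf Q (N *ᵥ v)
            + 2*(1/η)*(-((1-η)/η))*((N *ᵥ v) ⬝ᵥ Q *ᵥ v)
            + (-((1-η)/η))^2 * qf Q v
          = (qf Q (N *ᵥ v) - 2*(1-η)*((N *ᵥ v) ⬝ᵥ Q *ᵥ v) + (1-η)^2 * qf Q v) / η^2 := by
        field_simp
        ring
      rw [expand, div_le_iff₀ hη2]
      nlinarith [hgoal, hqv0]
    rw [hPdecomp, hPdecomp z, hEt, h1Et]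
    linarith
  -- final assembly
  refine ⟨η, ⟨hη0, hη1⟩, P, hPpos, ?_⟩
  intro x y
  have hAz : A *ᵥ x - A *ᵥ y = A *ᵥ (x - y) := (Matrix.mulVec_sub A x y).symm
  rw [hAz]
  obtain ⟨z, hzdef⟩ : ∃ z, z = x - y := ⟨_, rfl⟩
  rw [← hzdef]
  have hηne : η ≠ 0 := ne_of_gt hη0
  obtain ⟨t, htdef⟩ : ∃ t, t = (1/η) • (A *ᵥ z) + (-((1-η)/η)) • z := ⟨_, rfl⟩
  have hid1 : A *ᵥ z = (1-η) • z + η • t := by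
    rw [htdef]
    funext i
    simp only [Pi.add_apply, Pi.smul_apply, Pi.neg_apply, smul_eq_mul]
    field_simp
    ring
  have hid2 : (1 - A) *ᵥ z = η • (z - t) := by
    rw [Matrix.sub_mulVec, Matrix.one_mulVec, htdef]
    funext i
    simp only [Pi.sub_apply, Pi.add_apply, Pi.smul_apply, Pi.neg_apply, smul_eq_mul]
    field_simp
    ring
  rw [hid1, hid2]
  apply avg_key hPsym hη0 hη1 z t
  rw [htdef]
  exact hT z

end StmtNine

theorem stmt9 (n : ℕ) (A : Matrix (Fin n) (Fin n) ℝ) :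
    (∃ e ∈ Set.Ioo (0 : ℝ) 1, ∃ P : Matrix (Fin n) (Fin n) ℝ, P.PosDef ∧
        ∀ x y : Fin n → ℝ,
          qf P (A.mulVec x - A.mulVec y) ≤
            qf P (x - y) - ((1 - e) / e) * qf P ((1 - A).mulVec (x - y))) ↔
      (∀ x : ℕ → Fin n → ℝ, (∀ j, x (j + 1) = A.mulVec (x j)) →
        ∃ xbar : Fin n → ℝ, (1 - A).mulVec xbar = 0 ∧
          Tendsto x atTop (nhds xbar)) := by
  constructor
  · rintro ⟨e, he, P, hP, h⟩ x hx
    exact fwd A e he P hP h x hx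
  · intro H
    exact bwd A H
end

section
/- Let L ∈ ℝ^{N×N} be the Laplacian of a connected directed graph (row sums zero, 0 a simple eigenvalue, all nonzero eigenvalues with strictly positive real part), and (α_k) a positive sequence with α_k bounded, α_k → 0, Σ α_k = ∞. Then every solution of x(k+1) = x(k) − α_k L x(k) converges to c·1_N for some c ∈ ℝ. -/
open Matrix Filter Finset Polynomial

namespace Stmt16Aux

variable {N : ℕ}

def cvec {N : ℕ} (v : Fin N → ℝ) : Fin N → ℂ := fun i => (v i : ℂ)

lemma cvec_mulVec (A : Matrix (Fin N) (Fin N) ℝ) (v : Fin N → ℝ) :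
    (cmat A).mulVec (cvec v) = cvec (A.mulVec v) := by
  ext i
  simp only [cvec, cmat, Matrix.mulVec, dotProduct, Matrix.map_apply]
  push_cast
  rfl

lemma cvec_vecMul (A : Matrix (Fin N) (Fin N) ℝ) (v : Fin N → ℝ) :
    Matrix.vecMul (cvec v) (cmat A) = cvec (Matrix.vecMul v A) := by
  ext i
  simp only [cvec, cmat, Matrix.vecMul, dotProduct, Matrix.map_apply]
  push_cast
  rfl

lemma cvec_dot (v w : Fin N → ℝ) :
    (cvec v) ⬝ᵥ (cvec w) = ((v ⬝ᵥ w : ℝ) : ℂ) := by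
  simp only [cvec, dotProduct]
  push_cast
  rfl

/-- evaluation of the char polynomial is the determinant -/
lemma eval_charpoly (A : Matrix (Fin N) (Fin N) ℂ) (μ : ℂ) :
    A.charpoly.eval μ = (Matrix.diagonal (fun _ => μ) - A).det := by
  rw [Matrix.charpoly, ← Polynomial.coe_evalRingHom, RingHom.map_det]
  congr 1
  ext i j
  by_cases h : i = j
  · subst h; simp [Matrix.charmatrix_apply_eq]
  · simp [Matrix.charmatrix_apply_ne _ _ _ h, Matrix.diagonal_apply_ne _ h]

lemma isRoot_charpoly_iff (A : Matrix (Fin N) (Fin N) ℂ) (μ : ℂ) :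
    A.charpoly.IsRoot μ ↔ ∃ v, v ≠ 0 ∧ A.mulVec v = μ • v := by
  rw [Polynomial.IsRoot, eval_charpoly, ← Matrix.exists_mulVec_eq_zero_iff]
  constructor
  · rintro ⟨v, hv, h⟩
    refine ⟨v, hv, ?_⟩
    rw [Matrix.sub_mulVec] at h
    have : (Matrix.diagonal (fun _ => μ)).mulVec v = μ • v := by
      ext i; simp [Matrix.mulVec, diagonal_dotProduct]
    rw [this] at h
    exact (sub_eq_zero.mp h).symm
  · rintro ⟨v, hv, h⟩
    refine ⟨v, hv, ?_⟩
    rw [Matrix.sub_mulVec]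
    have : (Matrix.diagonal (fun _ => μ)).mulVec v = μ • v := by
      ext i; simp [Matrix.mulVec, diagonal_dotProduct]
    rw [this, h, sub_self]

end Stmt16Aux

namespace Stmt16Aux

lemma rootMult_le_natDegree {p : Polynomial ℂ} (hp : p ≠ 0) (a : ℂ) :
    p.rootMultiplicity a ≤ p.natDegree := by
  have h := Polynomial.pow_rootMultiplicity_dvd p a
  have := Polynomial.natDegree_le_of_dvd h hp
  simpa using this

lemma ker_structure (L : Matrix (Fin N) (Fin N) ℂ)
    (h1 : L.mulVec (fun _ => 1) = 0)
    (hm : L.charpoly.rootMultiplicity 0 = 1) :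
    0 < N ∧ (∀ v : Fin N → ℂ, L.mulVec (L.mulVec v) = 0 → ∃ c : ℂ, v = fun _ => c) := by
  have hN : 0 < N := by
    by_contra h
    push_neg at h
    interval_cases N
    have hd : L.charpoly.natDegree = 0 := by
      rw [Matrix.charpoly_natDegree_eq_dim]; simp
    have := rootMult_le_natDegree (Matrix.charpoly_monic L).ne_zero (0 : ℂ)
    omega
  refine ⟨hN, ?_⟩
  set f : Module.End ℂ (Fin N → ℂ) := Matrix.toLin' L with hf
  have hfapp : ∀ v, f v = L.mulVec v := fun v => Matrix.toLin'_apply L v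
  have hchar : f.charpoly = L.charpoly := by
    rw [← LinearMap.charpoly_toMatrix f (Pi.basisFun ℂ (Fin N)),
      LinearMap.toMatrix_eq_toMatrix', LinearMap.toMatrix'_toLin']
  have hrank : Module.finrank ℂ (f.maxGenEigenspace 0) = 1 := by
    rw [LinearMap.finrank_maxGenEigenspace_zero_eq, hchar,
      ← Polynomial.rootMultiplicity_eq_natTrailingDegree', hm]
  set one : Fin N → ℂ := fun _ => 1 with hone
  have hone_ne : one ≠ 0 := by
    intro h
    have := congrFun h ⟨0, hN⟩
    simp [hone] at this
  have hone_mem : one ∈ f.maxGenEigenspace 0 := by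
    rw [Module.End.mem_maxGenEigenspace]
    exact ⟨1, by simp [hfapp, h1]⟩
  have hspan : Submodule.span ℂ {one} = f.maxGenEigenspace 0 := by
    apply Submodule.eq_of_le_of_finrank_le
    · rw [Submodule.span_le, Set.singleton_subset_iff]; exact hone_mem
    · rw [hrank, finrank_span_singleton hone_ne]
  intro v hv
  have hv_mem : v ∈ f.maxGenEigenspace 0 := by
    rw [Module.End.mem_maxGenEigenspace]
    refine ⟨2, ?_⟩
    have : ((f - (0:ℂ) • (1 : Module.End ℂ (Fin N → ℂ))) ^ 2) v = f (f v) := by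
      simp [pow_two, Module.End.mul_apply]
    rw [this, hfapp, hfapp, hv]
  rw [← hspan, Submodule.mem_span_singleton] at hv_mem
  obtain ⟨c, hc⟩ := hv_mem
  exact ⟨c, by rw [← hc]; ext i; simp [hone]⟩

end Stmt16Aux

namespace Stmt16Aux

lemma cvec_one {N : ℕ} : cvec (fun _ : Fin N => (1:ℝ)) = fun _ => (1:ℂ) := by
  ext i; simp [cvec]

lemma exists_w (L : Matrix (Fin N) (Fin N) ℝ)
    (hrow : L.mulVec (fun _ => 1) = 0)
    (hm : (cmat L).charpoly.rootMultiplicity 0 = 1) :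
    ∃ w : Fin N → ℝ, Matrix.vecMul w L = 0 ∧ w ⬝ᵥ (fun _ => 1) = 1 := by
  set M := cmat L with hM
  have h1c : M.mulVec (fun _ => 1) = 0 := by
    have := cvec_mulVec L (fun _ => 1)
    rw [cvec_one, hrow] at this
    rw [this]; ext i; simp [cvec]
  obtain ⟨hN, hker⟩ := ker_structure M h1c hm
  -- det M = 0
  have hroot : M.charpoly.IsRoot 0 := by
    rw [← Polynomial.rootMultiplicity_pos (Matrix.charpoly_monic M).ne_zero, hm]
    norm_num
  have hdetM : M.det = 0 := by
    have := hroot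
    rw [Polynomial.IsRoot, eval_charpoly] at this
    have h2 : (Matrix.diagonal (fun _ : Fin N => (0:ℂ)) - M) = -M := by
      simp
    rw [h2, Matrix.det_neg] at this
    have : M.det = 0 := by
      rcases mul_eq_zero.mp this with h | h
      · exact absurd h (pow_ne_zero _ (by norm_num))
      · exact h
    exact this
  have hdetL : L.det = 0 := by
    have : ((L.det : ℝ) : ℂ) = M.det := by
      rw [hM]
      exact (RingHom.map_det Complex.ofRealHom L).symm ▸ rfl
    rw [hdetM] at this
    exact_mod_cast this
  obtain ⟨w₀, hw₀ne, hw₀⟩ := Matrix.exists_vecMul_eq_zero_iff.mpr hdetL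
  -- v ∈ ker L (real) implies constant
  have hkerR : ∀ v : Fin N → ℝ, L.mulVec v = 0 → ∀ i j, v i = v j := by
    intro v hv i j
    have hc : M.mulVec (M.mulVec (cvec v)) = 0 := by
      rw [cvec_mulVec, hv]
      have : cvec (0 : Fin N → ℝ) = 0 := by ext i; simp [cvec]
      rw [this, Matrix.mulVec_zero]
    obtain ⟨c, hc⟩ := hker _ hc
    have hi := congrFun hc i
    have hj := congrFun hc j
    simp only [cvec] at hi hj
    exact_mod_cast hi.trans hj.symm
  -- w₀ ⬝ᵥ 1 ≠ 0
  have hdot_ne : w₀ ⬝ᵥ (fun _ => (1:ℝ)) ≠ 0 := by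
    intro hdot
    set f : Module.End ℝ (Fin N → ℝ) := Matrix.toLin' L with hf
    have hfapp : ∀ v, f v = L.mulVec v := fun v => Matrix.toLin'_apply L v
    set g : (Fin N → ℝ) →ₗ[ℝ] ℝ :=
      { toFun := fun v => w₀ ⬝ᵥ v
        map_add' := fun u v => dotProduct_add w₀ u v
        map_smul' := fun c v => by simp } with hg
    have hrange_le : LinearMap.range f ≤ LinearMap.ker g := by
      rintro _ ⟨v, rfl⟩
      simp only [LinearMap.mem_ker, hg, LinearMap.coe_mk, AddHom.coe_mk, hfapp]
      rw [Matrix.dotProduct_mulVec, hw₀, zero_dotProduct]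
    -- ker f = span of ones
    have hkerf : LinearMap.ker f = Submodule.span ℝ {fun _ : Fin N => (1:ℝ)} := by
      apply le_antisymm
      · intro v hv
        rw [LinearMap.mem_ker, hfapp] at hv
        rw [Submodule.mem_span_singleton]
        refine ⟨v ⟨0, hN⟩, ?_⟩
        ext i
        simp [hkerR v hv i ⟨0, hN⟩]
      · rw [Submodule.span_le, Set.singleton_subset_iff]
        simp only [SetLike.mem_coe, LinearMap.mem_ker, hfapp]
        exact hrow
    have hone_ne : (fun _ : Fin N => (1:ℝ)) ≠ 0 := by
      intro h
      have := congrFun h ⟨0, hN⟩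
      norm_num at this
    have hkerf_rank : Module.finrank ℝ (LinearMap.ker f) = 1 := by
      rw [hkerf, finrank_span_singleton hone_ne]
    have hrn : Module.finrank ℝ (LinearMap.range f) + 1 = N := by
      have := LinearMap.finrank_range_add_finrank_ker f
      rw [hkerf_rank] at this
      simpa using this
    -- g is surjective
    obtain ⟨i0, hi0⟩ : ∃ i, w₀ i ≠ 0 := by
      by_contra h
      push_neg at h
      exact hw₀ne (funext h)
    have hgsurj : Function.Surjective g := by
      intro r
      refine ⟨(r / w₀ i0) • (Pi.single i0 (1:ℝ) : Fin N → ℝ), ?_⟩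
      simp only [hg, LinearMap.coe_mk, AddHom.coe_mk, dotProduct_smul,
        dotProduct_single, smul_eq_mul]
      field_simp
    have hkerg_rank : Module.finrank ℝ (LinearMap.ker g) + 1 = N := by
      have h1 := LinearMap.finrank_range_add_finrank_ker g
      rw [LinearMap.range_eq_top.mpr hgsurj] at h1
      simp only [finrank_top, Module.finrank_self] at h1
      have h2 : Module.finrank ℝ (Fin N → ℝ) = N := by simp
      omega
    have heq : LinearMap.range f = LinearMap.ker g := by
      apply Submodule.eq_of_le_of_finrank_le hrange_le
      omega
    have h1mem : (fun _ : Fin N => (1:ℝ)) ∈ LinearMap.ker g := by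
      simp only [LinearMap.mem_ker, hg, LinearMap.coe_mk, AddHom.coe_mk]
      exact hdot
    rw [← heq] at h1mem
    obtain ⟨u, hu⟩ := h1mem
    rw [hfapp] at hu
    -- contradiction: u would be a generalized eigenvector
    have hc : M.mulVec (M.mulVec (cvec u)) = 0 := by
      rw [cvec_mulVec, hu, cvec_one, h1c]
    obtain ⟨c, hcc⟩ := hker _ hc
    have : M.mulVec (cvec u) = 0 := by
      rw [hcc]
      have : (fun _ : Fin N => c) = c • (fun _ : Fin N => (1:ℂ)) := by
        ext i; simp
      rw [this, Matrix.mulVec_smul, h1c, smul_zero]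
    rw [cvec_mulVec, hu, cvec_one] at this
    have := congrFun this ⟨0, hN⟩
    norm_num at this
  refine ⟨(w₀ ⬝ᵥ (fun _ => 1))⁻¹ • w₀, ?_, ?_⟩
  · rw [Matrix.smul_vecMul, hw₀, smul_zero]
  · rw [smul_dotProduct, smul_eq_mul, inv_mul_cancel₀ hdot_ne]

end Stmt16Aux

namespace Stmt16Aux

lemma cmatB_mulVec (L : Matrix (Fin N) (Fin N) ℝ) (w : Fin N → ℝ) (v : Fin N → ℂ) :
    (cmat (L + Matrix.vecMulVec (fun _ => 1) w)).mulVec v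
      = (cmat L).mulVec v + ((cvec w) ⬝ᵥ v) • (fun _ => (1:ℂ)) := by
  ext i
  simp only [cmat, cvec, Matrix.mulVec, dotProduct, Matrix.map_apply, Matrix.add_apply,
    Matrix.vecMulVec_apply, Pi.add_apply, Pi.smul_apply, smul_eq_mul, mul_one]
  push_cast
  rw [← Finset.sum_add_distrib]
  exact Finset.sum_congr rfl fun j _ => by ring

lemma eigB (L : Matrix (Fin N) (Fin N) ℝ)
    (hrow : L.mulVec (fun _ => 1) = 0)
    (hm : (cmat L).charpoly.rootMultiplicity 0 = 1)
    (hre : ∀ lam : ℂ, (cmat L).charpoly.IsRoot lam → lam ≠ 0 → 0 < lam.re)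
    (w : Fin N → ℝ) (hw : Matrix.vecMul w L = 0) (hw1 : w ⬝ᵥ (fun _ => 1) = 1) :
    ∀ μ : ℂ, ∀ v : Fin N → ℂ, v ≠ 0 →
      (cmat (L + Matrix.vecMulVec (fun _ => 1) w)).mulVec v = μ • v → 0 < μ.re := by
  intro μ v hv hμv
  set M := cmat L with hM
  have h1c : M.mulVec (fun _ => 1) = 0 := by
    have := cvec_mulVec L (fun _ => 1)
    rw [cvec_one, hrow] at this
    rw [this]; ext i; simp [cvec]
  obtain ⟨hN, hker⟩ := ker_structure M h1c hm
  set wc := cvec w with hwc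
  have hwM : Matrix.vecMul wc M = 0 := by
    rw [hwc, hM, cvec_vecMul, hw]
    ext i; simp [cvec]
  have hw1c : wc ⬝ᵥ (fun _ => (1:ℂ)) = 1 := by
    rw [← cvec_one, hwc, cvec_dot, hw1]
    norm_num
  rw [cmatB_mulVec] at hμv
  -- dot with wc
  have hdotB : wc ⬝ᵥ ((cmat L).mulVec v + (wc ⬝ᵥ v) • (fun _ => (1:ℂ))) = wc ⬝ᵥ v := by
    rw [dotProduct_add, Matrix.dotProduct_mulVec, hwM, zero_dotProduct,
      dotProduct_smul, hw1c]
    simp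
  rw [hμv, dotProduct_smul] at hdotB
  by_cases hvw : wc ⬝ᵥ v = 0
  · -- v is eigenvector of L
    have hMv : M.mulVec v = μ • v := by
      rw [← hμv, hvw, zero_smul, add_zero]
    by_cases hμ : μ = 0
    · exfalso
      subst hμ
      rw [zero_smul] at hMv
      have h2 : M.mulVec (M.mulVec v) = 0 := by rw [hMv, Matrix.mulVec_zero]
      obtain ⟨c, hc⟩ := hker v h2
      have : wc ⬝ᵥ v = c := by
        rw [hc]
        have : (fun _ : Fin N => c) = c • (fun _ : Fin N => (1:ℂ)) := by ext i; simp
        rw [this, dotProduct_smul, hw1c, smul_eq_mul, mul_one]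
      rw [hvw] at this
      apply hv
      rw [hc, ← this]
      rfl
    · exact hre μ ((isRoot_charpoly_iff M μ).mpr ⟨v, hv, hMv⟩) hμ
  · -- μ = 1
    have hμ1 : μ = 1 := by
      rw [smul_eq_mul] at hdotB
      have h1 : μ * (wc ⬝ᵥ v) = 1 * (wc ⬝ᵥ v) := by rw [one_mul]; exact hdotB
      exact mul_right_cancel₀ hvw h1
    rw [hμ1]
    norm_num

end Stmt16Aux

namespace Stmt16Aux

attribute [local instance] Matrix.linftyOpNormedRing Matrix.linftyOpNormedAlgebra

lemma exists_contraction (Bc : Matrix (Fin N) (Fin N) ℂ)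
    (heig : ∀ μ : ℂ, ∀ v : Fin N → ℂ, v ≠ 0 → Bc.mulVec v = μ • v → 0 < μ.re) :
    ∃ (t0 r : ℝ) (n : (Fin N → ℂ) → ℝ), 0 < t0 ∧ 0 ≤ r ∧ r < 1 ∧
      (∀ v, ‖v‖ ≤ n v) ∧ (∀ v, 0 ≤ n v) ∧
      (∀ u v, n (u + v) ≤ n u + n v) ∧
      (∀ (c : ℝ) (v : Fin N → ℂ), 0 ≤ c → n (c • v) = c * n v) ∧
      (∀ v, n (v - (t0 : ℂ) • Bc.mulVec v) ≤ r * n v) := by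
  -- choice of t0
  classical
  set S := Bc.charpoly.roots.toFinset with hS
  have hSeig : ∀ μ ∈ S, 0 < μ.re := by
    intro μ hμ
    rw [hS, Multiset.mem_toFinset, Polynomial.mem_roots (Matrix.charpoly_monic Bc).ne_zero] at hμ
    obtain ⟨v, hv, hμv⟩ := (isRoot_charpoly_iff Bc μ).mp hμ
    exact heig μ v hv hμv
  set t0 : ℝ := if h : S.Nonempty then min 1 (S.inf' h (fun μ => μ.re / ‖μ‖^2)) else 1 with ht0
  have ht0pos : 0 < t0 := by
    rw [ht0]
    split_ifs with h
    · refine lt_min one_pos ?_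
      rw [Finset.lt_inf'_iff]
      intro μ hμ
      have h1 := hSeig μ hμ
      have h2 : (0:ℝ) < ‖μ‖^2 := by
        have hμ0 : μ ≠ 0 := fun hc => by simp [hc] at h1
        exact pow_pos (norm_pos_iff.mpr hμ0) 2
      exact div_pos h1 h2
    · exact one_pos
  have ht0le : ∀ μ ∈ S, t0 * ‖μ‖^2 ≤ μ.re := by
    intro μ hμ
    have hne : S.Nonempty := ⟨μ, hμ⟩
    have h2 : (0:ℝ) ≤ ‖μ‖^2 := by positivity
    have h3 : t0 ≤ μ.re / ‖μ‖^2 := by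
      rw [ht0, dif_pos hne]
      exact le_trans (min_le_right _ _) (Finset.inf'_le _ hμ)
    by_cases hz : ‖μ‖^2 = 0
    · rw [hz, mul_zero]; exact le_of_lt (hSeig μ hμ)
    · have h4 : (0:ℝ) < ‖μ‖^2 := lt_of_le_of_ne h2 (Ne.symm hz)
      rw [div_eq_mul_inv] at h3
      calc t0 * ‖μ‖^2 ≤ (μ.re * (‖μ‖^2)⁻¹) * ‖μ‖^2 := by
            apply mul_le_mul_of_nonneg_right h3 h2
        _ = μ.re := by rw [mul_assoc, inv_mul_cancel₀ (ne_of_gt h4), mul_one]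
  set A0c : Matrix (Fin N) (Fin N) ℂ := 1 - (t0 : ℂ) • Bc with hA0
  -- every eigenvalue of A0c has norm < 1
  have heigA0 : ∀ ν : ℂ, A0c.charpoly.IsRoot ν → ‖ν‖ < 1 := by
    intro ν hν
    obtain ⟨v, hv, hνv⟩ := (isRoot_charpoly_iff A0c ν).mp hν
    have ht0ne : (t0 : ℂ) ≠ 0 := by
      simp only [ne_eq, Complex.ofReal_eq_zero]
      exact ne_of_gt ht0pos
    have hBv : Bc.mulVec v = (((1 - ν) / t0 : ℂ)) • v := by
      rw [hA0] at hνv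
      rw [Matrix.sub_mulVec, Matrix.one_mulVec, Matrix.smul_mulVec] at hνv
      have h1 : (t0 : ℂ) • Bc.mulVec v = (1:ℂ) • v - ν • v := by
        rw [one_smul, ← hνv, sub_sub_cancel]
      rw [← sub_smul] at h1
      rw [← inv_smul_smul₀ ht0ne (Bc.mulVec v), h1, smul_smul, div_eq_inv_mul]
    set μ : ℂ := (1 - ν) / t0 with hμdef
    have hμS : μ ∈ S := by
      rw [hS, Multiset.mem_toFinset, Polynomial.mem_roots (Matrix.charpoly_monic Bc).ne_zero]
      exact (isRoot_charpoly_iff Bc μ).mpr ⟨v, hv, hBv⟩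
    have hμre := hSeig μ hμS
    have hμle := ht0le μ hμS
    have hνμ : ν = 1 - t0 * μ := by
      rw [hμdef]
      field_simp
      ring
    have hnorm : ‖ν‖^2 = 1 - 2*t0*μ.re + t0^2 * ‖μ‖^2 := by
      rw [hνμ, Complex.sq_norm, Complex.sq_norm,
        Complex.normSq_apply, Complex.normSq_apply]
      simp only [Complex.sub_re, Complex.sub_im, Complex.one_re, Complex.one_im,
        Complex.mul_re, Complex.mul_im, Complex.ofReal_re, Complex.ofReal_im]
      ring
    have hlt : ‖ν‖^2 < 1 := by
      have h1 : t0^2 * ‖μ‖^2 ≤ t0 * μ.re := by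
        have := mul_le_mul_of_nonneg_left (ht0le μ hμS) (le_of_lt ht0pos)
        calc t0^2 * ‖μ‖^2 = t0 * (t0 * ‖μ‖^2) := by ring
          _ ≤ t0 * μ.re := this
      nlinarith [mul_pos ht0pos hμre]
    nlinarith [norm_nonneg ν]
  -- bound the spectral radius
  haveI : CompleteSpace (Matrix (Fin N) (Fin N) ℂ) := FiniteDimensional.complete ℂ _
  set T := A0c.charpoly.roots.toFinset with hT
  set r0 : ℝ := if h : T.Nonempty then T.sup' h (fun ν => ‖ν‖) else 0 with hr0
  have hr0nonneg : 0 ≤ r0 := by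
    rw [hr0]
    split_ifs with h
    · obtain ⟨ν, hν⟩ := h
      exact le_trans (norm_nonneg ν) (Finset.le_sup' _ hν)
    · exact le_refl 0
  have hr0lt : r0 < 1 := by
    rw [hr0]
    split_ifs with h
    · rw [Finset.sup'_lt_iff]
      intro ν hν
      rw [hT, Multiset.mem_toFinset,
        Polynomial.mem_roots (Matrix.charpoly_monic A0c).ne_zero] at hν
      exact heigA0 ν hν
    · norm_num
  have hspec : spectralRadius ℂ A0c ≤ ENNReal.ofReal r0 := by
    rw [spectralRadius]
    refine iSup₂_le fun ν hν => ?_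
    have hνT : ν ∈ T := by
      rw [spectrum.mem_iff] at hν
      rw [Matrix.isUnit_iff_isUnit_det] at hν
      have hdet : (algebraMap ℂ (Matrix (Fin N) (Fin N) ℂ) ν - A0c).det = 0 := by
        by_contra hd
        exact hν (isUnit_iff_ne_zero.mpr hd)
      have halg : algebraMap ℂ (Matrix (Fin N) (Fin N) ℂ) ν
          = Matrix.diagonal (fun _ => ν) := by
        rw [Matrix.algebraMap_eq_diagonal]
        rfl
      rw [halg] at hdet
      have hroot : A0c.charpoly.IsRoot ν := by
        rw [Polynomial.IsRoot, eval_charpoly, hdet]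
      rw [hT, Multiset.mem_toFinset,
        Polynomial.mem_roots (Matrix.charpoly_monic A0c).ne_zero]
      exact hroot
    have hle : ‖ν‖ ≤ r0 := by
      rw [hr0, dif_pos ⟨ν, hνT⟩]
      exact Finset.le_sup' _ hνT
    rw [← enorm_eq_nnnorm, ← ofReal_norm]
    exact ENNReal.ofReal_le_ofReal hle
  set r : ℝ := (r0 + 1) / 2 with hr
  have hrpos : 0 < r := by rw [hr]; linarith
  have hrlt : r < 1 := by rw [hr]; linarith
  have hr0r : ENNReal.ofReal r0 < ENNReal.ofReal r := by
    rw [ENNReal.ofReal_lt_ofReal_iff hrpos]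
    rw [hr]; linarith
  -- Gelfand
  have hg := spectrum.pow_nnnorm_pow_one_div_tendsto_nhds_spectralRadius A0c
  have hev : ∀ᶠ k : ℕ in atTop, (‖A0c ^ k‖₊ : ENNReal) ^ (1 / (k:ℝ)) < ENNReal.ofReal r :=
    hg.eventually_lt_const (lt_of_le_of_lt hspec hr0r)
  obtain ⟨k0, hk0pos, hk0⟩ : ∃ k0 : ℕ, 0 < k0 ∧
      (‖A0c ^ k0‖₊ : ENNReal) ^ (1 / (k0:ℝ)) < ENNReal.ofReal r := by
    obtain ⟨k0, hk1, hk2⟩ := ((eventually_gt_atTop 0).and hev).exists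
    exact ⟨k0, hk1, hk2⟩
  have hk0norm : ‖A0c ^ k0‖ ≤ r ^ k0 := by
    have hk0ne : (k0:ℝ) ≠ 0 := by positivity
    have hraise := ENNReal.rpow_lt_rpow hk0 (by positivity : (0:ℝ) < (k0:ℝ))
    rw [← ENNReal.rpow_mul, one_div_mul_cancel hk0ne, ENNReal.rpow_one] at hraise
    have hrhs : (ENNReal.ofReal r) ^ ((k0:ℝ)) = ENNReal.ofReal (r ^ k0) := by
      have h2 := ENNReal.ofReal_rpow_of_nonneg (le_of_lt hrpos)
        (by positivity : (0:ℝ) ≤ (k0:ℝ))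
      rw [← Real.rpow_natCast r k0]
      first
      | exact h2.symm
      | exact h2
    rw [hrhs, ← enorm_eq_nnnorm, ← ofReal_norm] at hraise
    have := (ENNReal.ofReal_lt_ofReal_iff (by positivity)).mp hraise
    linarith
  -- the adapted norm
  set n : (Fin N → ℂ) → ℝ := fun v => ∑ k ∈ Finset.range k0, r⁻¹^k * ‖(A0c ^ k).mulVec v‖
    with hn
  have hnonneg : ∀ v, 0 ≤ n v := by
    intro v
    simp only [hn]
    apply Finset.sum_nonneg
    intro k _
    positivity
  have hlower : ∀ v, ‖v‖ ≤ n v := by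
    intro v
    have h0 : r⁻¹^0 * ‖(A0c ^ 0).mulVec v‖ = ‖v‖ := by
      simp [Matrix.one_mulVec]
    simp only [hn]
    rw [← h0]
    exact Finset.single_le_sum (f := fun k => r⁻¹^k * ‖(A0c ^ k).mulVec v‖)
      (fun k _ => by positivity) (Finset.mem_range.mpr hk0pos)
  have hsubadd : ∀ u v, n (u + v) ≤ n u + n v := by
    intro u v
    simp only [hn]
    rw [← Finset.sum_add_distrib]
    apply Finset.sum_le_sum
    intro k _
    rw [Matrix.mulVec_add, ← mul_add]
    apply mul_le_mul_of_nonneg_left (norm_add_le _ _) (by positivity)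
  have hsmul : ∀ (c : ℝ) (v : Fin N → ℂ), 0 ≤ c → n (c • v) = c * n v := by
    intro c v hc
    simp only [hn]
    rw [Finset.mul_sum]
    apply Finset.sum_congr rfl
    intro k _
    have h1 : (c • v) = ((c:ℂ)) • v := by
      ext i; simp [Complex.real_smul]
    rw [h1, Matrix.mulVec_smul, norm_smul]
    simp only [Complex.norm_real, Real.norm_eq_abs, abs_of_nonneg hc]
    ring
  have hcontr : ∀ v, n (A0c.mulVec v) ≤ r * n v := by
    intro v
    have hterm : ∀ k, (A0c ^ k).mulVec (A0c.mulVec v) = (A0c ^ (k+1)).mulVec v := by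
      intro k
      rw [Matrix.mulVec_mulVec, ← pow_succ]
    have hstep : n (A0c.mulVec v)
        = r * ((∑ k ∈ Finset.range (k0+1), r⁻¹^k * ‖(A0c ^ k).mulVec v‖) - ‖v‖) := by
      simp only [hn]
      rw [Finset.sum_range_succ']
      simp only [pow_zero, one_mul, Matrix.one_mulVec]
      rw [add_sub_cancel_right, Finset.mul_sum]
      apply Finset.sum_congr rfl
      intro k _
      rw [hterm k]
      rw [pow_succ]
      have hrne : r ≠ 0 := ne_of_gt hrpos
      field_simp
      have h1 : r * (1 / r) = 1 := mul_one_div_cancel hrne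
      linear_combination (-(1/r)^k * ‖(A0c ^ k * A0c) *ᵥ v‖) * h1
    rw [hstep, Finset.sum_range_succ]
    have hlast : r⁻¹^k0 * ‖(A0c ^ k0).mulVec v‖ ≤ ‖v‖ := by
      calc r⁻¹^k0 * ‖(A0c ^ k0).mulVec v‖
          ≤ r⁻¹^k0 * (‖A0c ^ k0‖ * ‖v‖) := by
            apply mul_le_mul_of_nonneg_left (Matrix.linfty_opNorm_mulVec _ _) (by positivity)
        _ ≤ r⁻¹^k0 * (r^k0 * ‖v‖) := by
            apply mul_le_mul_of_nonneg_left
              (mul_le_mul_of_nonneg_right hk0norm (norm_nonneg v)) (by positivity)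
        _ = ‖v‖ := by
            rw [← mul_assoc, ← mul_pow, inv_mul_cancel₀ (ne_of_gt hrpos), one_pow, one_mul]
    have : (∑ k ∈ Finset.range k0, r⁻¹^k * ‖(A0c ^ k).mulVec v‖)
        + r⁻¹^k0 * ‖(A0c ^ k0).mulVec v‖ - ‖v‖ ≤ n v := by
      simp only [hn]; linarith
    exact mul_le_mul_of_nonneg_left this (le_of_lt hrpos)
  refine ⟨t0, r, n, ht0pos, le_of_lt hrpos, hrlt, hlower, hnonneg, hsubadd, hsmul, ?_⟩
  intro v
  have h1 : v - (t0:ℂ) • Bc.mulVec v = A0c.mulVec v := by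
    rw [hA0, Matrix.sub_mulVec, Matrix.one_mulVec, Matrix.smul_mulVec]
  rw [h1]
  exact hcontr v

end Stmt16Aux

namespace Stmt16Aux

lemma norm_cvec (v : Fin N → ℝ) : ‖cvec v‖ = ‖v‖ := by
  rw [Pi.norm_def, Pi.norm_def]
  congr 1
  apply Finset.sup_congr rfl
  intro i _
  simp [cvec]

lemma outer_mulVec (w : Fin N → ℝ) (v : Fin N → ℝ) :
    (Matrix.vecMulVec (fun _ : Fin N => (1:ℝ)) w).mulVec v
      = (w ⬝ᵥ v) • (fun _ : Fin N => (1:ℝ)) := by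
  ext i
  simp only [Matrix.mulVec, dotProduct, Matrix.vecMulVec_apply, Pi.smul_apply,
    smul_eq_mul, mul_one, one_mul]

end Stmt16Aux

open Stmt16Aux in
theorem stmt16' (N : ℕ) (L : Matrix (Fin N) (Fin N) ℝ)
    (hrow : L.mulVec (fun _ => 1) = 0)
    (hsimple : (cmat L).charpoly.rootMultiplicity 0 = 1)
    (hre : ∀ lam : ℂ, (cmat L).charpoly.IsRoot lam → lam ≠ 0 → 0 < lam.re)
    (a : ℕ → ℝ)
    (hpos : ∀ j, 0 < a j)
    (hlim : Tendsto a atTop (nhds 0))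
    (hdiv : Tendsto (fun M => ∑ j ∈ Finset.range M, a j) atTop atTop)
    (x : ℕ → Fin N → ℝ)
    (hrec : ∀ j, x (j + 1) = x j - a j • L.mulVec (x j)) :
    ∃ c : ℝ, Tendsto x atTop (nhds (fun _ => c)) := by
  classical
  obtain ⟨w, hw, hw1⟩ := exists_w L hrow hsimple
  set Breal := L + Matrix.vecMulVec (fun _ => 1) w with hB
  have heig := eigB L hrow hsimple hre w hw hw1
  obtain ⟨t0, r, n, ht0, hr0, hr1, hlow, hnn, hadd, hsm, hcon⟩ :=
    exists_contraction (cmat Breal) (fun μ v hv h => heig μ v hv h)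
  set c := w ⬝ᵥ x 0 with hc
  set y : ℕ → Fin N → ℝ := fun j => x j - c • (fun _ : Fin N => (1:ℝ)) with hy
  refine ⟨c, ?_⟩
  -- invariance of w ⬝ᵥ x j
  have hwx : ∀ j, w ⬝ᵥ x j = c := by
    intro j
    induction j with
    | zero => rfl
    | succ j ih =>
      rw [hrec j, dotProduct_sub, dotProduct_smul,
        Matrix.dotProduct_mulVec, hw, zero_dotProduct, smul_zero, sub_zero, ih]
  have hwy : ∀ j, w ⬝ᵥ y j = 0 := by
    intro j
    rw [hy]
    simp only
    rw [dotProduct_sub, hwx j, dotProduct_smul, hw1]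
    simp
  -- recurrence for y
  have hyrec : ∀ j, y (j+1) = y j - a j • Breal.mulVec (y j) := by
    intro j
    have hBy : Breal.mulVec (y j) = L.mulVec (y j) := by
      rw [hB, Matrix.add_mulVec, outer_mulVec, hwy j, zero_smul, add_zero]
    have hLy : L.mulVec (y j) = L.mulVec (x j) := by
      rw [hy]
      simp only
      rw [Matrix.mulVec_sub, Matrix.mulVec_smul, hrow, smul_zero, sub_zero]
    rw [hBy, hLy, hy]
    simp only
    rw [hrec j]
    ext i
    simp
    ring
  -- complexified sequence
  set z : ℕ → Fin N → ℂ := fun j => cvec (y j) with hz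
  have hzrec : ∀ j, z (j+1) = z j - (a j : ℂ) • (cmat Breal).mulVec (z j) := by
    intro j
    have h1 : (cmat Breal).mulVec (z j) = cvec (Breal.mulVec (y j)) := cvec_mulVec _ _
    rw [hz]
    simp only
    rw [hyrec j, h1]
    ext i
    simp only [cvec, Pi.sub_apply, Pi.smul_apply, smul_eq_mul]
    push_cast
    ring
  -- one-step contraction
  set β : ℝ := (1 - r) / t0 with hβ
  have hβpos : 0 < β := by
    rw [hβ]
    apply div_pos (by linarith) ht0
  have hstep : ∀ j, a j ≤ t0 → n (z (j+1)) ≤ Real.exp (-(β * a j)) * n (z j) := by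
    intro j hj
    set α : ℝ := a j / t0 with hα
    have hα0 : 0 < α := div_pos (hpos j) ht0
    have hα1 : α ≤ 1 := by
      rw [hα, div_le_one ht0]
      exact hj
    have hαt0 : α * t0 = a j := div_mul_cancel₀ _ (ne_of_gt ht0)
    have hz1 : z (j+1) = (1 - α) • z j + α • (z j - (t0:ℂ) • (cmat Breal).mulVec (z j)) := by
      rw [hzrec j]
      ext i
      simp only [Pi.sub_apply, Pi.add_apply, Pi.smul_apply, smul_eq_mul, Complex.real_smul]
      push_cast [← hαt0]
      ring
    have h2 : n (z (j+1)) ≤ (1 - α) * n (z j) + α * (r * n (z j)) := by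
      rw [hz1]
      calc n ((1 - α) • z j + α • (z j - (t0:ℂ) • (cmat Breal).mulVec (z j)))
          ≤ n ((1 - α) • z j) + n (α • (z j - (t0:ℂ) • (cmat Breal).mulVec (z j))) :=
            hadd _ _
        _ = (1 - α) * n (z j) + α * n (z j - (t0:ℂ) • (cmat Breal).mulVec (z j)) := by
            rw [hsm _ _ (by linarith), hsm _ _ (le_of_lt hα0)]
        _ ≤ (1 - α) * n (z j) + α * (r * n (z j)) := by
            have := hcon (z j)
            nlinarith [hnn (z j)]
    have h3 : (1 - α) * n (z j) + α * (r * n (z j)) = (1 - (1-r)*α) * n (z j) := by ring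
    have h4 : β * a j = (1-r) * α := by
      rw [hβ, hα]
      field_simp
    have h5 : 1 - (1-r)*α ≤ Real.exp (-((1-r)*α)) := by
      have := Real.add_one_le_exp (-((1-r)*α))
      linarith
    calc n (z (j+1)) ≤ (1 - (1-r)*α) * n (z j) := by rw [← h3]; exact h2
      _ ≤ Real.exp (-((1-r)*α)) * n (z j) :=
          mul_le_mul_of_nonneg_right h5 (hnn _)
      _ = Real.exp (-(β * a j)) * n (z j) := by rw [h4]
  -- eventually a j ≤ t0
  obtain ⟨J, hJ⟩ : ∃ J, ∀ j, J ≤ j → a j ≤ t0 := by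
    have hev : ∀ᶠ j in atTop, a j < t0 := hlim.eventually_lt_const ht0
    obtain ⟨J, hJ⟩ := Filter.eventually_atTop.mp hev
    exact ⟨J, fun j hj => le_of_lt (hJ j hj)⟩
  -- iterated bound
  have hbound : ∀ m, n (z (J + m)) ≤ n (z J) * Real.exp (-(β * ∑ i ∈ Finset.range m, a (J + i))) := by
    intro m
    induction m with
    | zero => simp
    | succ m ih =>
      have h1 : n (z (J + (m+1))) ≤ Real.exp (-(β * a (J + m))) * n (z (J + m)) := by
        have := hstep (J + m) (hJ (J + m) (Nat.le_add_right J m))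
        simpa [← Nat.add_assoc] using this
      calc n (z (J + (m+1))) ≤ Real.exp (-(β * a (J + m))) * n (z (J + m)) := h1
        _ ≤ Real.exp (-(β * a (J + m))) * (n (z J) * Real.exp (-(β * ∑ i ∈ Finset.range m, a (J + i)))) :=
            mul_le_mul_of_nonneg_left ih (le_of_lt (Real.exp_pos _))
        _ = n (z J) * Real.exp (-(β * ∑ i ∈ Finset.range (m+1), a (J + i))) := by
            rw [Finset.sum_range_succ, mul_add, neg_add, Real.exp_add]
            ring
  -- divergence of partial sums
  have hsum : ∀ m, ∑ i ∈ Finset.range m, a (J + i)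
      = (∑ j ∈ Finset.range (J + m), a j) - ∑ j ∈ Finset.range J, a j := by
    intro m
    induction m with
    | zero => simp
    | succ m ih =>
      rw [Finset.sum_range_succ, ih, ← Nat.add_assoc, Finset.sum_range_succ]
      ring
  have hS : Tendsto (fun m => ∑ i ∈ Finset.range m, a (J + i)) atTop atTop := by
    have h1 : Tendsto (fun m => ∑ j ∈ Finset.range (J + m), a j) atTop atTop := by
      have h2 : (fun m => ∑ j ∈ Finset.range (J + m), a j)
          = (fun M => ∑ j ∈ Finset.range M, a j) ∘ (fun m => m + J) := by
        funext m
        simp [Nat.add_comm]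
      rw [h2]
      exact hdiv.comp (tendsto_add_atTop_nat J)
    have h3 : (fun m => ∑ i ∈ Finset.range m, a (J + i))
        = fun m => (∑ j ∈ Finset.range (J + m), a j) - ∑ j ∈ Finset.range J, a j := by
      funext m
      exact hsum m
    rw [h3]
    exact tendsto_atTop_add_const_right atTop _ h1
  have hexp : Tendsto (fun m => Real.exp (-(β * ∑ i ∈ Finset.range m, a (J + i)))) atTop (nhds 0) := by
    apply Real.tendsto_exp_atBot.comp
    have h1 : Tendsto (fun m => β * ∑ i ∈ Finset.range m, a (J + i)) atTop atTop :=
      hS.const_mul_atTop hβpos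
    exact tendsto_neg_atTop_atBot.comp h1
  -- conclude
  have hnz : Tendsto (fun m => n (z (J + m))) atTop (nhds 0) := by
    apply squeeze_zero (fun m => hnn _) hbound
    rw [show (0:ℝ) = n (z J) * 0 by ring]
    exact hexp.const_mul _
  have hyz : ∀ j, ‖y j‖ ≤ n (z j) := by
    intro j
    rw [← norm_cvec (y j)]
    exact hlow _
  have hynorm : Tendsto (fun m => ‖y (J + m)‖) atTop (nhds 0) :=
    squeeze_zero (fun m => norm_nonneg _) (fun m => hyz (J + m)) hnz
  have hy0 : Tendsto (fun m => y (J + m)) atTop (nhds 0) :=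
    tendsto_zero_iff_norm_tendsto_zero.mpr hynorm
  have hx0 : Tendsto (fun m => x (J + m)) atTop (nhds (fun _ => c)) := by
    have hxy : ∀ j, x j = y j + c • (fun _ => (1:ℝ)) := by
      intro j
      rw [hy]
      simp
    have h1 : Tendsto (fun m => y (J + m) + c • (fun _ : Fin N => (1:ℝ))) atTop
        (nhds (0 + c • (fun _ : Fin N => (1:ℝ)))) :=
      hy0.add tendsto_const_nhds
    rw [zero_add] at h1
    have h2 : (c • (fun _ : Fin N => (1:ℝ))) = (fun _ : Fin N => c) := by
      funext i
      simp
    have h3 : (fun m => x (J + m)) = fun m => y (J + m) + c • (fun _ : Fin N => (1:ℝ)) := by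
      funext m
      exact hxy (J + m)
    rw [h3, ← h2]
    exact h1
  have h4 : (fun m => x (J + m)) = fun m => x (m + J) := by
    funext m
    rw [Nat.add_comm]
  rw [h4] at hx0
  exact (tendsto_add_atTop_iff_nat J).mp hx0

theorem stmt16 (N : ℕ) (L : Matrix (Fin N) (Fin N) ℝ)
    (hrow : L.mulVec (fun _ => 1) = 0)
    (hsimple : algMult L 0 = 1)
    (hre : ∀ lam : ℂ, IsEig L lam → lam ≠ 0 → 0 < lam.re)
    (a : ℕ → ℝ) (amax : ℝ)
    (hpos : ∀ j, 0 < a j) (hbd : ∀ j, a j ≤ amax)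
    (hlim : Tendsto a atTop (nhds 0))
    (hdiv : Tendsto (fun M => ∑ j ∈ Finset.range M, a j) atTop atTop)
    (x : ℕ → Fin N → ℝ)
    (hrec : ∀ j, x (j + 1) = x j - a j • L.mulVec (x j)) :
    ∃ c : ℝ, Tendsto x atTop (nhds (fun _ => c)) :=
  stmt16' N L hrow hsimple hre a hpos hlim hdiv x hrec
end

section
/- Let B ∈ ℝ^{n×n} be nonexpansive in a P-induced norm (BᵀPB ⪯ P, P ≻ 0) with ker(I−B) nonempty, and let (β_k) be a sequence in (0,1] with β_k → 0 and Σ β_k = ∞. Then for every x(0), the iteration x(k+1) = (1−β_k)x(k) + β_k B x(k) converges to a point of ker(I−B). -/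
open Matrix Filter Finset Polynomial

set_option maxHeartbeats 1000000
open Filter Finset

section Abstract
variable {E : Type*} [NormedAddCommGroup E] [InnerProductSpace ℝ E] [FiniteDimensional ℝ E]

local notation "⟪" x ", " y "⟫" => @inner ℝ _ _ x y

theorem km_abstract (T : E →L[ℝ] E) (hT : ∀ v, ‖T v‖ ≤ ‖v‖)
    (b : ℕ → ℝ) (hb : ∀ j, b j ∈ Set.Ioc (0:ℝ) 1)
    (hlim : Tendsto b atTop (nhds 0))
    (hdiv : Tendsto (fun M => ∑ j ∈ Finset.range M, b j) atTop atTop)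
    (y : ℕ → E) (hrec : ∀ j, y (j+1) = (1 - b j) • y j + b j • T (y j)) :
    ∃ ybar, T ybar = ybar ∧ Tendsto y atTop (nhds ybar) := by
  haveI : CompleteSpace E := FiniteDimensional.complete ℝ E
  have hTnorm : ‖T‖ ≤ 1 := T.opNorm_le_bound zero_le_one (by simpa using hT)
  set F : Submodule ℝ E := LinearMap.ker ((T : E →ₗ[ℝ] E) - LinearMap.id) with hF
  have hmemF : ∀ v, v ∈ F ↔ T v = v := by
    intro v
    simp [hF, LinearMap.mem_ker, sub_eq_zero]
  -- adjoint fixes F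
  have hadj : ∀ v ∈ F, ContinuousLinearMap.adjoint T v = v := by
    intro v hv
    have hTv : T v = v := (hmemF v).1 hv
    set A := ContinuousLinearMap.adjoint T with hA
    have hAnorm : ‖A v‖ ≤ ‖v‖ := by
      calc ‖A v‖ ≤ ‖A‖ * ‖v‖ := A.le_opNorm v
        _ ≤ 1 * ‖v‖ := by
            have : ‖A‖ = ‖T‖ := by
              simpa [hA] using (ContinuousLinearMap.adjoint (𝕜 := ℝ) (E := E) (F := E)).norm_map T
            exact mul_le_mul_of_nonneg_right (this ▸ hTnorm) (norm_nonneg v)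
        _ = ‖v‖ := one_mul _
    have hinner : ⟪A v, v⟫ = ‖v‖^2 := by
      rw [ContinuousLinearMap.adjoint_inner_left, hTv, real_inner_self_eq_norm_sq]
    have hle : ‖A v - v‖^2 ≤ 0 := by
      have := norm_sub_sq_real (A v) v
      rw [hinner] at this
      nlinarith [sq_nonneg (‖A v‖ - ‖v‖), norm_nonneg (A v), norm_nonneg v]
    have hz : ‖A v - v‖ = 0 := by nlinarith [norm_nonneg (A v - v)]
    exact sub_eq_zero.mp (norm_eq_zero.mp hz)
  -- orthogonal complement invariant under T
  set W := Fᗮ with hW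
  have hWinv : ∀ w ∈ W, T w ∈ W := by
    intro w hw
    rw [Submodule.mem_orthogonal]
    intro v hv
    have : ⟪ContinuousLinearMap.adjoint T v, w⟫ = ⟪v, T w⟫ :=
      ContinuousLinearMap.adjoint_inner_left T w v
    rw [hadj v hv] at this
    rw [← this]
    exact (Submodule.mem_orthogonal F w).mp hw v hv
  set f : E := (F.orthogonalProjectionOnto (y 0) : E) with hf
  have hfF : f ∈ F := SetLike.coe_mem _
  have hTf : T f = f := (hmemF f).1 hfF
  set w : ℕ → E := fun k => y k - f with hwdef
  have hwrec : ∀ k, w (k+1) = (1 - b k) • w k + b k • T (w k) := by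
    intro k
    simp only [hwdef]
    rw [hrec k, map_sub, hTf]
    module
  have hwW : ∀ k, w k ∈ W := by
    intro k
    induction k with
    | zero => exact Submodule.sub_starProjection_mem_orthogonal (K := F) (y 0)
    | succ k ih =>
      rw [hwrec k]
      exact W.add_mem (W.smul_mem _ ih) (W.smul_mem _ (hWinv _ ih))
  -- the contraction constant
  have hkey : ∃ c : ℝ, 0 ≤ c ∧ c < 1 ∧ ∀ u ∈ W, ⟪T u, u⟫ ≤ c * ‖u‖^2 := by
    by_cases hWbot : W = ⊥
    · refine ⟨0, le_refl _, one_pos, ?_⟩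
      intro u hu
      rw [hWbot, Submodule.mem_bot] at hu
      simp [hu]
    · -- the unit sphere of W is nonempty and compact
      obtain ⟨u0, hu0W, hu0ne⟩ := Submodule.exists_mem_ne_zero_of_ne_bot hWbot
      set K : Set E := {u | u ∈ W ∧ ‖u‖ = 1} with hK
      have hKne : K.Nonempty := by
        refine ⟨‖u0‖⁻¹ • u0, W.smul_mem _ hu0W, ?_⟩
        rw [norm_smul, norm_inv, norm_norm, inv_mul_cancel₀ (norm_ne_zero_iff.mpr hu0ne)]
      have hKcomp : IsCompact K := by
        have hclosed : IsClosed K := by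
          refine IsClosed.inter ?_ ?_
          · exact Submodule.closed_of_finiteDimensional W
          · exact isClosed_eq continuous_norm continuous_const
        have hbdd : Bornology.IsBounded K := by
          refine Bornology.IsBounded.subset (Metric.isBounded_closedBall (x := (0:E)) (r := 1)) ?_
          intro u hu
          simpa [Metric.mem_closedBall, dist_zero_right] using le_of_eq hu.2
        exact Metric.isCompact_of_isClosed_isBounded hclosed hbdd
      have hgcont : Continuous (fun u : E => ⟪T u, u⟫) := by
        exact Continuous.inner (T.continuous) continuous_id
      obtain ⟨u1, hu1K, hu1max⟩ := hKcomp.exists_isMaxOn hKne hgcont.continuousOn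
      set c := ⟪T u1, u1⟫ with hc
      have hclt : c < 1 := by
        by_contra hge
        push_neg at hge
        have hn1 : ‖u1‖ = 1 := hu1K.2
        have hTu1 : ‖T u1‖ ≤ 1 := by simpa [hn1] using hT u1
        rw [hc] at hge
        have hz : ‖T u1 - u1‖^2 ≤ 0 := by
          have := norm_sub_sq_real (T u1) u1
          nlinarith [sq_nonneg (‖T u1‖ - 1), norm_nonneg (T u1)]
        have : T u1 = u1 := by
          have hz2 : ‖T u1 - u1‖ = 0 := by nlinarith [norm_nonneg (T u1 - u1)]
          exact sub_eq_zero.mp (norm_eq_zero.mp hz2)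
        have hu1F : u1 ∈ F := (hmemF u1).2 this
        have : ⟪u1, u1⟫ = (0:ℝ) := (Submodule.mem_orthogonal F u1).mp hu1K.1 u1 hu1F
        rw [real_inner_self_eq_norm_sq, hn1] at this
        norm_num at this
      refine ⟨max c 0, le_max_right _ _, max_lt hclt one_pos, ?_⟩
      intro u huW
      by_cases hu0 : u = 0
      · simp [hu0]
      · have hnu : ‖u‖ ≠ 0 := norm_ne_zero_iff.mpr hu0
        have hmem : (‖u‖⁻¹ • u) ∈ K := by
          refine ⟨W.smul_mem _ huW, ?_⟩
          rw [norm_smul, norm_inv, norm_norm, inv_mul_cancel₀ hnu]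
        have hle := hu1max hmem
        have : ⟪T (‖u‖⁻¹ • u), ‖u‖⁻¹ • u⟫ ≤ c := hle
        rw [_root_.map_smul, real_inner_smul_left, real_inner_smul_right] at this
        have hpos : (0:ℝ) < ‖u‖⁻¹ := by positivity
        have h2 : ⟪T u, u⟫ ≤ c * ‖u‖^2 := by
          have h3 : ‖u‖⁻¹ * (‖u‖⁻¹ * ⟪T u, u⟫) ≤ c := this
          have h4 := mul_le_mul_of_nonneg_left h3 (sq_nonneg ‖u‖)
          have h5 : ‖u‖^2 * (‖u‖⁻¹ * (‖u‖⁻¹ * ⟪T u, u⟫)) = ⟪T u, u⟫ := by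
            field_simp
          rw [h5] at h4
          linarith
        calc ⟪T u, u⟫ ≤ c * ‖u‖^2 := h2
          _ ≤ max c 0 * ‖u‖^2 := by
            exact mul_le_mul_of_nonneg_right (le_max_left _ _) (sq_nonneg _)
  obtain ⟨c, hc0, hc1, hcb⟩ := hkey
  have hstep : ∀ k, ‖w (k+1)‖^2 ≤ (1 - 2 * b k * (1 - b k) * (1 - c)) * ‖w k‖^2 := by
    intro k
    obtain ⟨hbk0, hbk1⟩ := hb k
    rw [hwrec k]
    have hTw : ‖T (w k)‖^2 ≤ ‖w k‖^2 := by
      have := hT (w k); nlinarith [norm_nonneg (T (w k)), norm_nonneg (w k)]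
    have hiw : ⟪T (w k), w k⟫ ≤ c * ‖w k‖^2 := hcb _ (hwW k)
    have hexp : ‖(1 - b k) • w k + b k • T (w k)‖^2
        = (1-b k)^2 * ‖w k‖^2 + 2*(1-b k)*(b k) * ⟪T (w k), w k⟫ + (b k)^2 * ‖T (w k)‖^2 := by
      rw [norm_add_sq_real, real_inner_smul_left, real_inner_smul_right,
        norm_smul, norm_smul, real_inner_comm]
      simp only [Real.norm_eq_abs, mul_pow, sq_abs]
      ring
    rw [hexp]
    nlinarith [mul_nonneg (mul_nonneg (sub_nonneg.mpr hbk1) hbk0.le)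
        (sub_nonneg.mpr hiw), mul_nonneg (sq_nonneg (b k)) (sub_nonneg.mpr hTw),
      sq_nonneg (w k |> norm)]
  -- find N with b k ≤ 1/2 beyond N
  obtain ⟨N, hN⟩ := (Filter.eventually_atTop).mp
    (hlim.eventually_lt_const (by norm_num : (0:ℝ) < 1/2))
  -- exponential bound
  have hqexp : ∀ k ≥ N, (1 - 2 * b k * (1 - b k) * (1 - c)) ≤ Real.exp (-((1-c) * b k)) := by
    intro k hk
    obtain ⟨hbk0, hbk1⟩ := hb k
    have hbk2 : b k < 1/2 := hN k hk
    have h1 : 1 - 2 * b k * (1 - b k) * (1 - c) ≤ 1 - (1-c) * b k := by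
      nlinarith [mul_nonneg (mul_nonneg (by linarith : (0:ℝ) ≤ 1-c) hbk0.le)
        (by linarith : (0:ℝ) ≤ 1 - 2 * b k)]
    have h2 : -((1-c) * b k) + 1 ≤ Real.exp (-((1-c) * b k)) := Real.add_one_le_exp _
    linarith
  -- iterate the bound
  have hiter : ∀ m : ℕ, ‖w (N+m)‖^2
      ≤ ‖w N‖^2 * Real.exp (-((1-c) * ∑ j ∈ Finset.range m, b (N+j))) := by
    intro m
    induction m with
    | zero => simp
    | succ m ih =>
      have h1 : ‖w (N+m+1)‖^2 ≤ (1 - 2 * b (N+m) * (1 - b (N+m)) * (1 - c)) * ‖w (N+m)‖^2 :=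
        hstep (N+m)
      have h2 := hqexp (N+m) (Nat.le_add_right N m)
      have h3 : (1 - 2 * b (N+m) * (1 - b (N+m)) * (1 - c)) * ‖w (N+m)‖^2
          ≤ Real.exp (-((1-c) * b (N+m))) * ‖w (N+m)‖^2 :=
        mul_le_mul_of_nonneg_right h2 (sq_nonneg _)
      have h4 : Real.exp (-((1-c) * b (N+m))) * ‖w (N+m)‖^2
          ≤ Real.exp (-((1-c) * b (N+m))) * (‖w N‖^2 * Real.exp (-((1-c) * ∑ j ∈ Finset.range m, b (N+j)))) :=
        mul_le_mul_of_nonneg_left ih (Real.exp_nonneg _)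
      have h5 : Real.exp (-((1-c) * b (N+m))) * (‖w N‖^2 * Real.exp (-((1-c) * ∑ j ∈ Finset.range m, b (N+j))))
          = ‖w N‖^2 * Real.exp (-((1-c) * ∑ j ∈ Finset.range (m+1), b (N+j))) := by
        rw [Finset.sum_range_succ, mul_add, neg_add, Real.exp_add]
        ring
      have : N + (m+1) = N + m + 1 := by ring
      rw [this]
      calc ‖w (N+m+1)‖^2 ≤ _ := h1
        _ ≤ _ := h3
        _ ≤ _ := h4
        _ = _ := h5
  -- the RHS tends to 0
  have hsum : Tendsto (fun m => ∑ j ∈ Finset.range m, b (N+j)) atTop atTop := by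
    have heq : ∀ m, ∑ j ∈ Finset.range m, b (N+j)
        = (∑ j ∈ Finset.range (N+m), b j) - (∑ j ∈ Finset.range N, b j) := by
      intro m
      rw [Finset.sum_range_add]
      ring
    simp only [heq]
    apply Filter.tendsto_atTop_add_const_right
    have h := hdiv.comp (tendsto_add_atTop_nat N)
    simpa [Function.comp_def, Nat.add_comm] using h
  have hrhs : Tendsto (fun m => ‖w N‖^2 * Real.exp (-((1-c) * ∑ j ∈ Finset.range m, b (N+j))))
      atTop (nhds 0) := by
    rw [show (0:ℝ) = ‖w N‖^2 * 0 by ring]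
    apply Tendsto.const_mul
    apply Real.tendsto_exp_atBot.comp
    exact tendsto_neg_atTop_atBot.comp (hsum.const_mul_atTop (by linarith : (0:ℝ) < 1-c))
  -- squeeze: ‖w (N+m)‖² → 0
  have hsq0 : Tendsto (fun m => ‖w (N+m)‖^2) atTop (nhds 0) :=
    squeeze_zero (fun m => sq_nonneg _) hiter hrhs
  have hw0 : Tendsto (fun k => ‖w k‖^2) atTop (nhds 0) := by
    have : (fun m => ‖w (N+m)‖^2) = (fun m => ‖w (m+N)‖^2) := by
      funext m; rw [Nat.add_comm]
    rw [this] at hsq0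
    exact (tendsto_add_atTop_iff_nat N).mp hsq0
  have hwn : Tendsto (fun k => ‖w k‖) atTop (nhds 0) := by
    have hs : Tendsto (fun k => Real.sqrt (‖w k‖^2)) atTop (nhds (Real.sqrt 0)) :=
      (Real.continuous_sqrt.tendsto 0).comp hw0
    simpa [Real.sqrt_sq (norm_nonneg _)] using hs
  have hwz : Tendsto w atTop (nhds 0) := tendsto_zero_iff_norm_tendsto_zero.mpr hwn
  refine ⟨f, hTf, ?_⟩
  have : Tendsto (fun k => f + w k) atTop (nhds (f + 0)) := tendsto_const_nhds.add hwz
  simpa [hwdef] using this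
end Abstract

open Matrix

theorem stmt19' (n : ℕ) (B P : Matrix (Fin n) (Fin n) ℝ)
    (hP : P.PosDef) (hNE : (P - Bᵀ * P * B).PosSemidef)
    (b : ℕ → ℝ) (hb : ∀ j, b j ∈ Set.Ioc (0 : ℝ) 1)
    (hlim : Tendsto b atTop (nhds 0))
    (hdiv : Tendsto (fun M => ∑ j ∈ Finset.range M, b j) atTop atTop)
    (x : ℕ → Fin n → ℝ)
    (hrec : ∀ j, x (j + 1) = (1 - b j) • x j + b j • B.mulVec (x j)) :
    ∃ xbar : Fin n → ℝ, (1 - B).mulVec xbar = 0 ∧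
      Tendsto x atTop (nhds xbar) := by
  obtain ⟨S, hSsym, hSS⟩ : ∃ S : Matrix (Fin n) (Fin n) ℝ, Sᵀ = S ∧ S * S = P :=
    open scoped MatrixOrder in
    ⟨CFC.sqrt P, by
      rw [← conjTranspose_eq_transpose_of_trivial]
      open scoped MatrixOrder in
      exact (CFC.sqrt_nonneg P).posSemidef.1, CFC.sqrt_mul_sqrt_self P hP.posSemidef.nonneg⟩
  have hSdet : IsUnit S.det := by
    have hPdet : (0:ℝ) < P.det := hP.det_pos
    rw [← hSS, det_mul] at hPdet
    have : S.det ≠ 0 := fun h => by simp [h] at hPdet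
    exact this.isUnit
  have hSinv_mul : S⁻¹ * S = 1 := nonsing_inv_mul S hSdet
  have hmul_Sinv : S * S⁻¹ = 1 := mul_nonsing_inv S hSdet
  have hSinvT : S⁻¹ᵀ = S⁻¹ := by rw [transpose_nonsing_inv, hSsym]
  set A := S * B * S⁻¹ with hAdef
  -- 1 - AᵀA is PSD
  have hAPSD : (1 - Aᵀ * A).PosSemidef := by
    have h1 : Aᵀ * A = S⁻¹ * (Bᵀ * P * B) * S⁻¹ := by
      rw [hAdef, transpose_mul, transpose_mul, hSinvT, hSsym, ← hSS]
      simp only [Matrix.mul_assoc]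
    have h2 : (1 : Matrix (Fin n) (Fin n) ℝ) = S⁻¹ * P * S⁻¹ := by
      rw [← hSS, ← Matrix.mul_assoc, Matrix.mul_assoc (S⁻¹ * S), hSinv_mul, hmul_Sinv,
        Matrix.mul_one]
    have h3 : 1 - Aᵀ * A = (S⁻¹)ᴴ * (P - Bᵀ * P * B) * S⁻¹ := by
      rw [conjTranspose_eq_transpose_of_trivial, hSinvT, h1, h2, Matrix.mul_sub,
        Matrix.sub_mul]
    rw [h3]
    exact hNE.conjTranspose_mul_mul_same S⁻¹
  -- pointwise nonexpansiveness of A in the Euclidean norm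
  have hdot : ∀ v : Fin n → ℝ, (A *ᵥ v) ⬝ᵥ (A *ᵥ v) ≤ v ⬝ᵥ v := by
    intro v
    have := hAPSD.dotProduct_mulVec_nonneg v
    rw [star_trivial, sub_mulVec, dotProduct_sub, one_mulVec] at this
    have h4 : v ⬝ᵥ ((Aᵀ * A) *ᵥ v) = (A *ᵥ v) ⬝ᵥ (A *ᵥ v) := by
      rw [← mulVec_mulVec, dotProduct_mulVec, vecMul_transpose]
    rw [h4] at this
    linarith
  -- the Euclidean operator
  set T : EuclideanSpace ℝ (Fin n) →L[ℝ] EuclideanSpace ℝ (Fin n) :=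
    LinearMap.toContinuousLinearMap (Matrix.toEuclideanLin A) with hTdef
  have hTapp : ∀ v : Fin n → ℝ,
      T ((WithLp.equiv 2 (Fin n → ℝ)).symm v) = (WithLp.equiv 2 (Fin n → ℝ)).symm (A *ᵥ v) := by
    intro v
    simp [hTdef, Matrix.toLpLin_toLp]
  have hnorm_sq : ∀ z : EuclideanSpace ℝ (Fin n),
      ‖z‖^2 = (WithLp.equiv 2 (Fin n → ℝ) z) ⬝ᵥ (WithLp.equiv 2 (Fin n → ℝ) z) := by
    intro z
    rw [← real_inner_self_eq_norm_sq]
    rw [PiLp.inner_apply]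
    rfl
  have hT : ∀ v, ‖T v‖ ≤ ‖v‖ := by
    intro v
    have h1 : ‖T v‖^2 ≤ ‖v‖^2 := by
      have hv : v = (WithLp.equiv 2 (Fin n → ℝ)).symm (WithLp.equiv 2 (Fin n → ℝ) v) := rfl
      rw [hnorm_sq, hnorm_sq]
      nth_rewrite 1 [hv]
      rw [hTapp, Equiv.apply_symm_apply]
      exact hdot _
    have h2 := Real.sqrt_le_sqrt h1
    rwa [Real.sqrt_sq (norm_nonneg _), Real.sqrt_sq (norm_nonneg _)] at h2
  -- the transformed sequence
  set y : ℕ → EuclideanSpace ℝ (Fin n) :=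
    fun k => (WithLp.equiv 2 (Fin n → ℝ)).symm (S *ᵥ x k) with hydef
  have hyrec : ∀ j, y (j+1) = (1 - b j) • y j + b j • T (y j) := by
    intro j
    have hTy : T (y j) = (WithLp.equiv 2 (Fin n → ℝ)).symm (S *ᵥ (B *ᵥ x j)) := by
      rw [hydef]
      rw [hTapp]
      congr 1
      rw [mulVec_mulVec, hAdef, Matrix.mul_assoc (S*B), hSinv_mul, Matrix.mul_one,
        ← mulVec_mulVec]
    rw [hydef]
    simp only [hrec j, mulVec_add, mulVec_smul]
    rw [hTy]
    rfl
  obtain ⟨ybar, hfixY, htendY⟩ := km_abstract T hT b hb hlim hdiv y hyrec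
  set yb : Fin n → ℝ := WithLp.equiv 2 (Fin n → ℝ) ybar with hybdef
  have hAyb : A *ᵥ yb = yb := by
    have := congrArg (WithLp.equiv 2 (Fin n → ℝ)) hfixY
    rw [hTdef] at this
    simpa [Matrix.ofLp_toLpLin, hybdef] using this
  refine ⟨S⁻¹ *ᵥ yb, ?_, ?_⟩
  · have hB : B *ᵥ (S⁻¹ *ᵥ yb) = S⁻¹ *ᵥ yb := by
      have h1 := congrArg (fun u => S⁻¹ *ᵥ u) hAyb
      simp only [hAdef, mulVec_mulVec] at h1
      have h2 : S⁻¹ * (S * B * S⁻¹) = B * S⁻¹ := by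
        rw [Matrix.mul_assoc S B, ← Matrix.mul_assoc S⁻¹ S, hSinv_mul, Matrix.one_mul]
      rw [h2, ← mulVec_mulVec] at h1
      exact h1
    rw [sub_mulVec, one_mulVec, hB, sub_self]
  · -- continuity transfer
    have hxk : ∀ k, x k = (Matrix.mulVecLin S⁻¹) (WithLp.equiv 2 (Fin n → ℝ) (y k)) := by
      intro k
      rw [hydef]
      simp only [Equiv.apply_symm_apply, mulVecLin_apply, mulVec_mulVec, hSinv_mul, one_mulVec]
    have hcont : Continuous (fun z : EuclideanSpace ℝ (Fin n) =>
        (Matrix.mulVecLin S⁻¹) (WithLp.equiv 2 (Fin n → ℝ) z)) := by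
      exact ((Matrix.mulVecLin S⁻¹).continuous_of_finiteDimensional).comp
        (PiLp.continuous_ofLp 2 (fun _ : Fin n => ℝ))
    have := (hcont.tendsto ybar).comp htendY
    simp only [Function.comp_def] at this
    have hx : x = fun k => (Matrix.mulVecLin S⁻¹) (WithLp.equiv 2 (Fin n → ℝ) (y k)) :=
      funext hxk
    rw [hx]
    simpa [hybdef, mulVecLin_apply] using this

theorem stmt19 (n : ℕ) (B P : Matrix (Fin n) (Fin n) ℝ)
    (hP : P.PosDef) (hNE : (P - Bᵀ * P * B).PosSemidef)
    (hfix : ∃ v : Fin n → ℝ, (1 - B).mulVec v = 0)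
    (b : ℕ → ℝ) (hb : ∀ j, b j ∈ Set.Ioc (0 : ℝ) 1)
    (hlim : Tendsto b atTop (nhds 0))
    (hdiv : Tendsto (fun M => ∑ j ∈ Finset.range M, b j) atTop atTop)
    (x : ℕ → Fin n → ℝ)
    (hrec : ∀ j, x (j + 1) = (1 - b j) • x j + b j • B.mulVec (x j)) :
    ∃ xbar : Fin n → ℝ, (1 - B).mulVec xbar = 0 ∧
      Tendsto x atTop (nhds xbar) := by
  exact stmt19' n B P hP hNE b hb hlim hdiv x hrec
end
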